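/- arXiv:1403.6990 — 5 statements merged into one kernel-verified Lean document; each statement's English description precedes it below -/
import Mathlib

section
/- Under the assumptions of the previous setting, if additionally $P(Y_{j+1} - Y_j \geq m \mid \mathcal{F}_j) \leq e^{-\beta m}$ almost surely for all $j$ and all natural numbers $m$, then $P(Y_I \geq m^2) \leq (m+1)e^{-\beta m}$ for all $m$, where $I = \inf\{i : Y_i = Y_{i+1}\}$ and $Y_I$ denotes the terminal (constant) value of the sequence. -/
open MeasureTheory

/-- Auxiliary: conditional probability bound implies `P (C ∩ S) ≤ c * P C` for
`C` measurable in `ℱ j`. -/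
lemma cond_step {Ω : Type*} {m0 : MeasurableSpace Ω} (P : Measure Ω) [IsProbabilityMeasure P]
    (ℱ : Filtration ℕ m0) (j : ℕ) (S : Set Ω) (hS : MeasurableSet S) (c : ℝ) (hc : 0 ≤ c)
    (C : Set Ω) (hC : MeasurableSet[ℱ j] C)
    (h : ∀ᵐ ω ∂P, (P[Set.indicator S (fun _ => (1 : ℝ)) | ℱ j]) ω ≤ c) :
    P (C ∩ S) ≤ ENNReal.ofReal c * P C := by
  have hCm : MeasurableSet C := ℱ.le j C hC
  have hint : Integrable (S.indicator fun _ => (1 : ℝ)) P :=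
    (integrable_const 1).indicator hS
  have h1 : ∫ ω in C, (S.indicator fun _ => (1 : ℝ)) ω ∂P = (P (C ∩ S)).toReal := by
    rw [setIntegral_indicator hS]
    simp
    rfl
  have h2 : ∫ ω in C, (S.indicator fun _ => (1 : ℝ)) ω ∂P
      = ∫ ω in C, (P[Set.indicator S (fun _ => (1 : ℝ)) | ℱ j]) ω ∂P :=
    (setIntegral_condExp (ℱ.le j) hint hC).symm
  have h3 : ∫ ω in C, (P[Set.indicator S (fun _ => (1 : ℝ)) | ℱ j]) ω ∂P
      ≤ ∫ ω in C, c ∂P := by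
    refine integral_mono_ae (integrable_condExp.restrict) ((integrable_const c).restrict) ?_
    exact ae_restrict_of_ae h
  have h4 : ∫ ω in C, c ∂P = (P C).toReal * c := by
    simp [smul_eq_mul]
    exact Or.inl rfl
  have key : (P (C ∩ S)).toReal ≤ (P C).toReal * c := by
    rw [← h1, h2]; rw [h4] at h3; exact h3
  calc P (C ∩ S) = ENNReal.ofReal ((P (C ∩ S)).toReal) :=
        (ENNReal.ofReal_toReal (measure_ne_top _ _)).symm
    _ ≤ ENNReal.ofReal ((P C).toReal * c) := ENNReal.ofReal_le_ofReal key
    _ = ENNReal.ofReal c * P C := by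
        rw [ENNReal.ofReal_mul' hc, ENNReal.ofReal_toReal (measure_ne_top _ _), mul_comm]

/-- under the hypotheses of Statement 0, together with the conditional tail
bound `P(Y (j+1) - Y j ≥ m | ℱ j) ≤ exp (-β * m)` a.s. and a.s. finiteness of
`I = inf {i | Y i = Y (i+1)}`, we have `P (Y_I ≥ m²) ≤ (m+1) exp (-β m)`.  Since the
sequence is nondecreasing and becomes constant at time `I`, the terminal value `Y_I`
is `≥ m²` iff some `Y i` is `≥ m²`. -/
theorem stmt1 {Ω : Type*} {m0 : MeasurableSpace Ω} (P : Measure Ω) [IsProbabilityMeasure P]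
    (ℱ : Filtration ℕ m0) (Y : ℕ → Ω → ℕ) (β : ℝ) (hβ : 0 < β)
    (hadapt : ∀ i, Measurable[ℱ i] (Y i))
    (hY0 : ∀ ω, Y 0 ω = 0)
    (hmono : ∀ i, ∀ᵐ ω ∂P, Y i ω ≤ Y (i + 1) ω)
    (hcond : ∀ i, ∀ᵐ ω ∂P,
      (P[Set.indicator {ω' | Y i ω' < Y (i + 1) ω'} (fun _ => (1 : ℝ)) | ℱ i]) ω
        ≤ Real.exp (-β))
    (htail : ∀ j m, ∀ᵐ ω ∂P,
      (P[Set.indicator {ω' | Y j ω' + m ≤ Y (j + 1) ω'} (fun _ => (1 : ℝ)) | ℱ j]) ω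
        ≤ Real.exp (-β * m))
    (hstick : ∀ ω i, Y i ω = Y (i + 1) ω → ∀ j, i ≤ j → Y j ω = Y (j + 1) ω)
    (hfin : ∀ᵐ ω ∂P, ∃ i, Y i ω = Y (i + 1) ω)
    (m : ℕ) :
    P {ω | ∃ i, m ^ 2 ≤ Y i ω} ≤ ENNReal.ofReal ((m + 1) * Real.exp (-β * m)) := by
  classical
  rcases Nat.eq_zero_or_pos m with hm | hm
  · subst hm
    simp only [Nat.cast_zero, zero_add, mul_zero, neg_zero, Real.exp_zero, mul_one,
      ENNReal.ofReal_one]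
    exact prob_le_one
  set inc : ℕ → Set Ω := fun j => {ω | Y j ω < Y (j + 1) ω} with hinc
  set T : ℕ → Set Ω := fun j => {ω | Y j ω + m ≤ Y (j + 1) ω} with hTdef
  set A : ℕ → Set Ω := fun k => ⋂ j ∈ Finset.range k, inc j with hAdef
  have hYm : ∀ i, Measurable (Y i) := fun i => (hadapt i).mono (ℱ.le i) le_rfl
  have hYmF : ∀ i k, i ≤ k → Measurable[ℱ k] (Y i) := fun i k hik =>
    (hadapt i).mono (ℱ.mono hik) le_rfl
  have hincF : ∀ j k, j + 1 ≤ k → MeasurableSet[ℱ k] (inc j) := fun j k hjk =>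
    measurableSet_lt (hYmF j k (le_trans (Nat.le_succ j) hjk)) (hYmF (j + 1) k hjk)
  have hincM : ∀ j, MeasurableSet (inc j) := fun j =>
    measurableSet_lt (hYm j) (hYm (j + 1))
  have hTM : ∀ j, MeasurableSet (T j) := fun j =>
    measurableSet_le ((hYm j).add_const m) (hYm (j + 1))
  have hAF : ∀ k, MeasurableSet[ℱ k] (A k) := by
    intro k
    apply Finset.measurableSet_biInter
    intro j hj
    exact hincF j k (Finset.mem_range.mp hj)
  have hAstep : ∀ k, P (A (k + 1)) ≤ ENNReal.ofReal (Real.exp (-β)) * P (A k) := by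
    intro k
    have hAeq : A (k + 1) = A k ∩ inc k := by
      simp only [hAdef, Finset.range_add_one, Finset.set_biInter_insert]
      exact Set.inter_comm _ _
    rw [hAeq]
    exact cond_step P ℱ k (inc k) (hincM k) _ (Real.exp_nonneg _) (A k) (hAF k) (hcond k)
  have hAbound : ∀ k, P (A k) ≤ ENNReal.ofReal (Real.exp (-β)) ^ k := by
    intro k
    induction k with
    | zero => simp [hAdef]
    | succ k ih =>
      calc P (A (k + 1)) ≤ ENNReal.ofReal (Real.exp (-β)) * P (A k) := hAstep k
        _ ≤ ENNReal.ofReal (Real.exp (-β)) * ENNReal.ofReal (Real.exp (-β)) ^ k := by gcongr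
        _ = ENNReal.ofReal (Real.exp (-β)) ^ (k + 1) := by rw [pow_succ, mul_comm]
  have hTbound : ∀ j, P (T j) ≤ ENNReal.ofReal (Real.exp (-β * m)) := by
    intro j
    have h := cond_step P ℱ j (T j) (hTM j) _ (Real.exp_nonneg _) Set.univ
      MeasurableSet.univ (htail j m)
    simpa [Set.univ_inter, measure_univ] using h
  have hsub : ∀ᵐ ω ∂P,
      ω ∈ {ω | ∃ i, m ^ 2 ≤ Y i ω} → ω ∈ A m ∪ ⋃ j ∈ Finset.range m, T j := by
    have hmono' : ∀ᵐ ω ∂P, ∀ i, Y i ω ≤ Y (i + 1) ω := ae_all_iff.2 hmono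
    filter_upwards [hmono'] with ω hw hmem
    by_contra hcon
    rw [Set.mem_union] at hcon
    push_neg at hcon
    obtain ⟨hA', hT'⟩ := hcon
    -- from ω ∉ A m: some step j < m does not increase
    have hj' : ∃ j < m, ¬ (Y j ω < Y (j + 1) ω) := by
      by_contra hall
      push_neg at hall
      exact hA' (Set.mem_iInter₂.mpr fun j hj => hall j (Finset.mem_range.mp hj))
    obtain ⟨j, hjm, hjne⟩ := hj'
    have heq : Y j ω = Y (j + 1) ω := le_antisymm (hw j) (Nat.le_of_not_lt hjne)
    -- jumps are all < m
    have hjump : ∀ k < m, Y (k + 1) ω < Y k ω + m := by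
      intro k hk
      have : ω ∉ T k := fun hmem' =>
        hT' (Set.mem_biUnion (Finset.mem_range.mpr hk) hmem')
      exact Nat.lt_of_not_le this
    -- monotone
    have hmon : Monotone fun i => Y i ω := monotone_nat_of_le_succ hw
    -- constant after j
    have hconst : ∀ i, j ≤ i → Y i ω = Y j ω := by
      intro i hi
      induction i, hi using Nat.le_induction with
      | base => rfl
      | succ i hi ih => rw [← ih]; exact (hstick ω j heq i hi).symm
    -- bound on Y k for k ≤ j
    have hbd : ∀ k, k ≤ j → Y k ω + k ≤ k * m := by
      intro k hk
      induction k with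
      | zero => simp [hY0]
      | succ k ih =>
        have h1 := ih (Nat.le_of_succ_le hk)
        have h2 := hjump k (lt_of_lt_of_le (Nat.lt_of_succ_le hk) (le_of_lt hjm))
        have h3 : Y (k + 1) ω + 1 ≤ Y k ω + m := Nat.succ_le_of_lt h2
        calc Y (k + 1) ω + (k + 1) = (Y (k + 1) ω + 1) + k := by ring
          _ ≤ (Y k ω + m) + k := by omega
          _ = (Y k ω + k) + m := by ring
          _ ≤ k * m + m := by omega
          _ = (k + 1) * m := by ring
    have hjb : Y j ω ≤ j * m := le_trans (Nat.le_add_right _ _) (hbd j le_rfl)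
    have hjlt : j * m < m * m := Nat.mul_lt_mul_of_lt_of_le hjm le_rfl hm
    obtain ⟨i, hi⟩ := hmem
    have hile : Y i ω ≤ Y j ω := by
      rcases le_or_gt i j with h | h
      · exact hmon h
      · exact le_of_eq (hconst i (le_of_lt h))
    have h5 : m * m ≤ j * m := by
      calc m * m = m ^ 2 := (pow_two m).symm
        _ ≤ Y i ω := hi
        _ ≤ Y j ω := hile
        _ ≤ j * m := hjb
    exact absurd h5 (not_le.mpr hjlt)
  have hexp : ENNReal.ofReal (Real.exp (-β)) ^ m = ENNReal.ofReal (Real.exp (-β * m)) := by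
    rw [← ENNReal.ofReal_pow (Real.exp_nonneg _), ← Real.exp_nat_mul]
    ring_nf
  calc P {ω | ∃ i, m ^ 2 ≤ Y i ω}
      ≤ P (A m ∪ ⋃ j ∈ Finset.range m, T j) := measure_mono_ae hsub
    _ ≤ P (A m) + P (⋃ j ∈ Finset.range m, T j) := measure_union_le _ _
    _ ≤ ENNReal.ofReal (Real.exp (-β)) ^ m + ∑ j ∈ Finset.range m, P (T j) :=
        add_le_add (hAbound m) (measure_biUnion_finset_le _ _)
    _ ≤ ENNReal.ofReal (Real.exp (-β * m))
        + ∑ _j ∈ Finset.range m, ENNReal.ofReal (Real.exp (-β * m)) := by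
        rw [hexp]
        gcongr with j hj
        exact hTbound j
    _ = ((m : ENNReal) + 1) * ENNReal.ofReal (Real.exp (-β * m)) := by
        rw [Finset.sum_const, Finset.card_range, nsmul_eq_mul]
        ring
    _ = ENNReal.ofReal ((m + 1) * Real.exp (-β * m)) := by
        rw [ENNReal.ofReal_mul (by positivity)]
        congr 1
        rw [show ((m : ℝ) + 1) = ((m + 1 : ℕ) : ℝ) by push_cast; ring,
          ENNReal.ofReal_natCast]
        push_cast
        ring
end

section
/- Under the assumptions of the previous two statements, $P(I \leq m \text{ and } Y_I \leq m^2) \geq 1 - (m+2)e^{-\beta m}$ for all natural numbers $m$. -/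
open MeasureTheory

/-- Key conditional-probability step: if `S` is `ℱ j`-measurable and the conditional
probability of `T` given `ℱ j` is a.e. at most `c ≥ 0`, then `P (S ∩ T) ≤ c * P S`. -/
lemma step_bound {Ω : Type*} {m0 : MeasurableSpace Ω} (P : Measure Ω) [IsProbabilityMeasure P]
    (ℱ : Filtration ℕ m0) (j : ℕ) (T S : Set Ω) (hT : MeasurableSet T)
    (hS : MeasurableSet[ℱ j] S) {c : ℝ} (hc : 0 ≤ c)
    (hbound : ∀ᵐ ω ∂P, (P[T.indicator (fun _ => (1 : ℝ)) | ℱ j]) ω ≤ c) :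
    P (S ∩ T) ≤ ENNReal.ofReal c * P S := by
  have hint : Integrable (T.indicator fun _ => (1 : ℝ)) P :=
    (integrable_const (1 : ℝ)).indicator hT
  have h1 : ∫ ω in S, (P[T.indicator (fun _ => (1 : ℝ)) | ℱ j]) ω ∂P
      = ∫ ω in S, T.indicator (fun _ => (1 : ℝ)) ω ∂P :=
    setIntegral_condExp (ℱ.le j) hint hS
  have h2 : ∫ ω in S, T.indicator (fun _ => (1 : ℝ)) ω ∂P = (P (S ∩ T)).toReal := by
    rw [integral_indicator hT, setIntegral_const, Measure.real_def, Measure.restrict_apply hT,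
      Set.inter_comm T S, smul_eq_mul, mul_one]
  have h3 : ∫ ω in S, (P[T.indicator (fun _ => (1 : ℝ)) | ℱ j]) ω ∂P
      ≤ ∫ ω in S, (fun _ => c) ω ∂P :=
    setIntegral_mono_ae integrable_condExp.integrableOn
      (integrable_const c).integrableOn hbound
  have h4 : ∫ ω in S, (fun _ => c) ω ∂P = (P S).toReal * c := by
    rw [setIntegral_const, smul_eq_mul, Measure.real_def]
  have h5 : (P (S ∩ T)).toReal ≤ c * (P S).toReal := by
    rw [← h2, ← h1]
    calc ∫ ω in S, (P[T.indicator (fun _ => (1 : ℝ)) | ℱ j]) ω ∂P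
        ≤ (P S).toReal * c := h4 ▸ h3
      _ = c * (P S).toReal := mul_comm _ _
  calc P (S ∩ T) = ENNReal.ofReal ((P (S ∩ T)).toReal) := by
        rw [ENNReal.ofReal_toReal (measure_ne_top P _)]
    _ ≤ ENNReal.ofReal (c * (P S).toReal) := ENNReal.ofReal_le_ofReal h5
    _ = ENNReal.ofReal c * ENNReal.ofReal ((P S).toReal) := ENNReal.ofReal_mul hc
    _ = ENNReal.ofReal c * P S := by rw [ENNReal.ofReal_toReal (measure_ne_top P _)]

/-- under the hypotheses of Statements 0 and 1,
`P (I ≤ m ∧ Y_I ≤ m²) ≥ 1 - (m+2) exp (-β m)`.  Here `I ≤ m` is expressed as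
`∃ i ≤ m, Y i ω = Y (i+1) ω`, and (the sequence being nondecreasing and eventually
constant) `Y_I ≤ m²` is expressed as `∀ i, Y i ω ≤ m²`. -/
theorem stmt2 {Ω : Type*} {m0 : MeasurableSpace Ω} (P : Measure Ω) [IsProbabilityMeasure P]
    (ℱ : Filtration ℕ m0) (Y : ℕ → Ω → ℕ) (β : ℝ) (hβ : 0 < β)
    (hadapt : ∀ i, Measurable[ℱ i] (Y i))
    (hY0 : ∀ ω, Y 0 ω = 0)
    (hmono : ∀ i, ∀ᵐ ω ∂P, Y i ω ≤ Y (i + 1) ω)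
    (hcond : ∀ i, ∀ᵐ ω ∂P,
      (P[Set.indicator {ω' | Y i ω' < Y (i + 1) ω'} (fun _ => (1 : ℝ)) | ℱ i]) ω
        ≤ Real.exp (-β))
    (htail : ∀ j m, ∀ᵐ ω ∂P,
      (P[Set.indicator {ω' | Y j ω' + m ≤ Y (j + 1) ω'} (fun _ => (1 : ℝ)) | ℱ j]) ω
        ≤ Real.exp (-β * m))
    (hstick : ∀ ω i, Y i ω = Y (i + 1) ω → ∀ j, i ≤ j → Y j ω = Y (j + 1) ω)
    (hfin : ∀ᵐ ω ∂P, ∃ i, Y i ω = Y (i + 1) ω)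
    (m : ℕ) :
    1 - ENNReal.ofReal ((m + 2) * Real.exp (-β * m))
      ≤ P {ω | (∃ i ≤ m, Y i ω = Y (i + 1) ω) ∧ ∀ i, Y i ω ≤ m ^ 2} := by
  classical
  set good : Set Ω := {ω | (∃ i ≤ m, Y i ω = Y (i + 1) ω) ∧ ∀ i, Y i ω ≤ m ^ 2} with hgood
  set T : ℕ → Set Ω := fun i => {ω | Y i ω < Y (i + 1) ω} with hT
  set B : ℕ → Set Ω := fun j => {ω | Y j ω + m ≤ Y (j + 1) ω} with hB
  -- measurability facts
  have hYm : ∀ i k, i ≤ k → Measurable[ℱ k] (Y i) :=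
    fun i k hik => (hadapt i).mono (ℱ.mono hik) le_rfl
  have hTmF : ∀ i k, i < k → MeasurableSet[ℱ k] (T i) := fun i k hik =>
    measurableSet_lt (hYm i k hik.le) (hYm (i + 1) k hik)
  have hTm : ∀ i, MeasurableSet (T i) := fun i =>
    (ℱ.le (i + 1)) _ (hTmF i (i + 1) (Nat.lt_succ_self i))
  have hBmF : ∀ j, MeasurableSet[ℱ (j + 1)] (B j) := fun j =>
    measurableSet_le ((hYm j (j + 1) (Nat.le_succ j)).add_const m) (hYm (j + 1) (j + 1) le_rfl)
  have hBm : ∀ j, MeasurableSet (B j) := fun j => (ℱ.le (j + 1)) _ (hBmF j)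
  have hYmeas : ∀ i, Measurable (Y i) := fun i => (hadapt i).mono (ℱ.le i) le_rfl
  have hgoodm : MeasurableSet good := by
    have hrw : good = (⋃ i ∈ Finset.range (m + 1), {ω | Y i ω = Y (i + 1) ω})
        ∩ ⋂ i, {ω | Y i ω ≤ m ^ 2} := by
      ext ω
      simp only [hgood, Set.mem_setOf_eq, Set.mem_inter_iff, Set.mem_iUnion,
        Set.mem_iInter, Finset.mem_range, Nat.lt_succ_iff]
      tauto
    rw [hrw]
    refine MeasurableSet.inter ?_ ?_
    · exact (Finset.range (m + 1)).measurableSet_biUnion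
        (fun i _ => measurableSet_eq_fun (hYmeas i) (hYmeas (i + 1)))
    · exact MeasurableSet.iInter fun i =>
        measurableSet_le (hYmeas i) measurable_const
  -- E k := first k steps all strictly increase
  set E : ℕ → Set Ω := fun k => ⋂ i ∈ Finset.range k, T i with hE
  have hEmF : ∀ k, MeasurableSet[ℱ k] (E k) := fun k =>
    (Finset.range k).measurableSet_biInter
      (fun i hi => hTmF i k (Finset.mem_range.mp hi))
  have hEbound : ∀ k, P (E k) ≤ ENNReal.ofReal (Real.exp (-β)) ^ k := by
    intro k
    induction k with
    | zero => rw [pow_zero]; exact prob_le_one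
    | succ k ih =>
      have hEsucc : E (k + 1) = E k ∩ T k := by
        ext ω
        simp only [hE, Set.mem_iInter, Finset.mem_range, Set.mem_inter_iff]
        constructor
        · intro h
          exact ⟨fun i hi => h i (Nat.lt_succ_of_lt hi), h k (Nat.lt_succ_self k)⟩
        · rintro ⟨h1, h2⟩ i hi
          rcases Nat.lt_succ_iff_lt_or_eq.mp hi with h | h
          · exact h1 i h
          · subst h; exact h2
      rw [hEsucc, pow_succ]
      calc P (E k ∩ T k) ≤ ENNReal.ofReal (Real.exp (-β)) * P (E k) :=
            step_bound P ℱ k (T k) (E k) (hTm k) (hEmF k) (Real.exp_nonneg _) (hcond k)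
        _ ≤ ENNReal.ofReal (Real.exp (-β)) * ENNReal.ofReal (Real.exp (-β)) ^ k :=
            mul_le_mul_right ih _
        _ = ENNReal.ofReal (Real.exp (-β)) ^ k * ENNReal.ofReal (Real.exp (-β)) := mul_comm _ _
  have hEbound' : P (E m) ≤ ENNReal.ofReal (Real.exp (-β * m)) := by
    calc P (E m) ≤ ENNReal.ofReal (Real.exp (-β)) ^ m := hEbound m
      _ = ENNReal.ofReal (Real.exp (-β) ^ m) := (ENNReal.ofReal_pow (Real.exp_nonneg _) m).symm
      _ = ENNReal.ofReal (Real.exp (-β * m)) := by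
          rw [← Real.exp_nat_mul]
          ring_nf
  have hBbound : ∀ j, P (B j) ≤ ENNReal.ofReal (Real.exp (-β * m)) := by
    intro j
    have := step_bound P ℱ j (B j) Set.univ (hBm j) MeasurableSet.univ
      (Real.exp_nonneg _) (htail j m)
    simpa using this
  -- a.e. inclusion of the complement of `good`
  set Bad : Set Ω := E m ∪ ⋃ j ∈ Finset.range m, B j with hBad
  have hincl : ∀ᵐ ω ∂P, ω ∈ goodᶜ → ω ∈ Bad := by
    have hmono' : ∀ᵐ ω ∂P, ∀ i, Y i ω ≤ Y (i + 1) ω := ae_all_iff.mpr hmono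
    filter_upwards [hmono'] with ω hmω hωg
    have hmono2 : ∀ j k, j ≤ k → Y j ω ≤ Y k ω := by
      intro j k hjk
      induction k, hjk using Nat.le_induction with
      | base => exact le_rfl
      | succ k hk ih => exact le_trans ih (hmω k)
    by_cases hex : ∃ i ≤ m, Y i ω = Y (i + 1) ω
    · -- stuck by time m; some value exceeds m², so a big jump occurred
      obtain ⟨i, him, heq⟩ := hex
      have hbig : ∃ k, ¬ Y k ω ≤ m ^ 2 := by
        by_contra hc
        push_neg at hc
        exact hωg ⟨⟨i, him, heq⟩, fun k => not_lt.mp (hc k).not_gt⟩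
      obtain ⟨k, hk⟩ := hbig
      push_neg at hk
      have hstuck : ∀ j, i ≤ j → Y j ω = Y i ω := by
        intro j hij
        induction j, hij using Nat.le_induction with
        | base => rfl
        | succ j hj ih => rw [← hstick ω i heq j hj, ih]
      have hki : Y k ω ≤ Y i ω := by
        rcases le_or_gt k i with h | h
        · exact hmono2 k i h
        · exact le_of_eq (hstuck k h.le)
      have hYi : m ^ 2 < Y i ω := lt_of_lt_of_le hk hki
      right
      by_contra hnB
      simp only [Set.mem_iUnion, Finset.mem_range, not_exists] at hnB
      have hsmall : ∀ j < i, Y (j + 1) ω + 1 ≤ Y j ω + m := by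
        intro j hj
        have hjm : j < m := lt_of_lt_of_le hj him
        have h2 : ¬ Y j ω + m ≤ Y (j + 1) ω := hnB j hjm
        omega
      have haux : ∀ n, (∀ j < n, Y (j + 1) ω + 1 ≤ Y j ω + m) → Y n ω + n ≤ Y 0 ω + n * m := by
        intro n
        induction n with
        | zero => simp
        | succ n ih =>
          intro hh
          have h1 := hh n (Nat.lt_succ_self n)
          have h2 := ih (fun j hj => hh j (Nat.lt_succ_of_lt hj))
          calc Y (n + 1) ω + (n + 1) ≤ Y n ω + n + m := by omega
            _ ≤ Y 0 ω + n * m + m := by omega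
            _ = Y 0 ω + (n + 1) * m := by ring
      have h6 := haux i hsmall
      rw [hY0 ω] at h6
      have h7 : Y i ω ≤ i * m := by omega
      have h8 : Y i ω ≤ m * m := le_trans h7 (Nat.mul_le_mul_right m him)
      rw [pow_two] at hYi
      omega
    · -- no equality up to m: all first m steps strictly increase
      left
      simp only [hE, Set.mem_iInter, Finset.mem_range]
      intro i hi
      push_neg at hex
      exact lt_of_le_of_ne (hmω i) (hex i (le_of_lt hi))
  have hBadbound : P Bad ≤ ENNReal.ofReal ((m + 2) * Real.exp (-β * m)) := by
    calc P Bad ≤ P (E m) + P (⋃ j ∈ Finset.range m, B j) := measure_union_le _ _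
      _ ≤ P (E m) + ∑ j ∈ Finset.range m, P (B j) := by
          gcongr
          exact measure_biUnion_finset_le _ _
      _ ≤ ENNReal.ofReal (Real.exp (-β * m))
          + ∑ j ∈ Finset.range m, ENNReal.ofReal (Real.exp (-β * m)) := by
          exact add_le_add hEbound' (Finset.sum_le_sum fun j _ => hBbound j)
      _ = ((m : ENNReal) + 1) * ENNReal.ofReal (Real.exp (-β * m)) := by
          rw [Finset.sum_const, Finset.card_range, nsmul_eq_mul]
          ring
      _ ≤ ((m : ENNReal) + 2) * ENNReal.ofReal (Real.exp (-β * m)) := by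
          gcongr
          exact one_le_two
      _ = ENNReal.ofReal ((m + 2) * Real.exp (-β * m)) := by
          rw [ENNReal.ofReal_mul (by positivity)]
          congr 1
          rw [ENNReal.ofReal_add (Nat.cast_nonneg m) (by norm_num),
            ENNReal.ofReal_natCast]
          norm_num
  have hcompl : P goodᶜ ≤ ENNReal.ofReal ((m + 2) * Real.exp (-β * m)) :=
    le_trans (measure_mono_ae hincl) hBadbound
  have hgc : P goodᶜ = 1 - P good := prob_compl_eq_one_sub hgoodm
  have hle1 : P good ≤ 1 := prob_le_one
  calc 1 - ENNReal.ofReal ((m + 2) * Real.exp (-β * m)) ≤ 1 - P goodᶜ :=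
        tsub_le_tsub_left hcompl 1
    _ = 1 - (1 - P good) := by rw [hgc]
    _ = P good := ENNReal.sub_sub_cancel ENNReal.one_ne_top hle1
end

section
/- Suppose that for oriented percolation with parameter $p < p_c$ there exist $\beta > 0$ such that $P(\xi^{\{0\}}_n \neq \emptyset) \leq e^{-\beta n}$ for all $n$. Then for every $x \in 2\mathbb{Z}$ and every $m\in\mathbb{N}$, the probability that there exists $y > x$ with $(y,0)$ connected by an open path to the set $C_{x,0} \cap \bigcup_{j\geq m} L_j$ is at most $e^{-\beta' m}$ for some $\beta' > 0$ depending only on $\beta$. -/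
open MeasureTheory ProbabilityTheory

/-- A site of the plane: `(horizontal coordinate, level)`. -/
abbrev Site : Type := ℤ × ℤ

/-- An oriented bond is determined by its bottom site and a direction
(`true` = up-right, `false` = up-left). -/
abbrev Bond : Type := Site × Bool

/-- A percolation configuration: each bond is open (`true`) or closed (`false`). -/
abbrev Config : Type := Bond → Bool

/-- The top endpoint of the bond starting at `s` with direction `d`. -/
def bondStep (s : Site) (d : Bool) : Site := (s.1 + (if d then 1 else -1), s.2 + 1)

/-- There is an open oriented path from `a` to `b` in the configuration `ω`. -/
def OpenPath (ω : Config) (a b : Site) : Prop :=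
  ∃ (k : ℕ) (γ : ℕ → Site), γ 0 = a ∧ γ k = b ∧
    ∀ i < k, ∃ d : Bool, bondStep (γ i) d = γ (i + 1) ∧ ω (γ i, d) = true

/-- The bond variables are i.i.d. Bernoulli(p) under `P`. -/
def IIDBernoulli (P : Measure Config) (p : ℝ) : Prop :=
  (∀ b : Bond, P {ω : Config | ω b = true} = ENNReal.ofReal p) ∧
    iIndepFun (fun (b : Bond) (ω : Config) => ω b) P


/-- The cone emerging from `(x, m)`: sites `(v, k)` with `k ≥ m` and `|v - x| ≤ k - m`. -/
def Cone (x m : ℤ) : Set Site := {s : Site | m ≤ s.2 ∧ |s.1 - x| ≤ s.2 - m}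

namespace Stmt7

/-- Horizontal displacement after `i` steps with directions `d`. -/
def disp (d : ℕ → Bool) (i : ℕ) : ℤ := ∑ j ∈ Finset.range i, (if d j then 1 else -1)

lemma disp_zero (d : ℕ → Bool) : disp d 0 = 0 := by simp [disp]

lemma disp_succ (d : ℕ → Bool) (i : ℕ) :
    disp d (i + 1) = disp d i + (if d i then 1 else -1) := by
  simp [disp, Finset.sum_range_succ]

lemma abs_disp_le (d : ℕ → Bool) (i : ℕ) : |disp d i| ≤ (i : ℤ) := by
  induction i with
  | zero => simp [disp]
  | succ i ih =>
    rw [disp_succ]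
    refine (abs_add_le _ _).trans ?_
    have : |(if d i then (1:ℤ) else -1)| = 1 := by by_cases h : d i <;> simp [h]
    rw [this]
    push_cast
    omega

/-- The event that there is an open path of length `n` (i.e. surviving to level `n`)
starting from `(y, 0)`. -/
def Surv (y : ℤ) (n : ℕ) : Set Config :=
  {ω | ∃ d : ℕ → Bool, ∀ i < n, ω ((y + disp d i, (i : ℤ)), d i) = true}

lemma path_structure {ω : Config} {y v k : ℤ} (h : OpenPath ω (y, 0) (v, k)) :
    ∃ n : ℕ, k = n ∧ ∃ d : ℕ → Bool, v = y + disp d n ∧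
      ∀ i < n, ω ((y + disp d i, (i : ℤ)), d i) = true := by
  classical
  obtain ⟨n, γ, h0, hn, hstep⟩ := h
  choose dfun hd hω using hstep
  set d : ℕ → Bool := fun i => if h : i < n then dfun i h else true with hddef
  have key : ∀ i, i ≤ n → γ i = (y + disp d i, (i : ℤ)) := by
    intro i
    induction i with
    | zero => intro _; simpa [disp_zero] using h0
    | succ i ih =>
      intro hle
      have hi : i < n := Nat.lt_of_succ_le hle
      have hγ : γ i = (y + disp d i, (i : ℤ)) := ih (Nat.le_of_lt hi)
      have hb := hd i hi
      have hdi : d i = dfun i hi := by simp [hddef, hi]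
      rw [← hb, hγ, bondStep, disp_succ]
      simp [hdi]
      ring
  refine ⟨n, ?_, d, ?_, ?_⟩
  · have := key n le_rfl
    rw [hn] at this
    exact (Prod.mk.injEq _ _ _ _).mp this |>.2
  · have := key n le_rfl
    rw [hn] at this
    exact (Prod.mk.injEq _ _ _ _).mp this |>.1
  · intro i hi
    have hγ : γ i = (y + disp d i, (i : ℤ)) := key i (Nat.le_of_lt hi)
    have hdi : d i = dfun i hi := by simp [hddef, hi]
    rw [hγ.symm, hdi]
    exact hω i hi

lemma surv_path {ω : Config} {y : ℤ} {n : ℕ} (h : ω ∈ Surv y n) :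
    ∃ v, OpenPath ω (y, 0) (v, (n : ℤ)) := by
  obtain ⟨d, hd⟩ := h
  refine ⟨y + disp d n, n, fun i => (y + disp d i, (i : ℤ)), by simp [disp_zero], rfl, ?_⟩
  intro i hi
  refine ⟨d i, ?_, hd i hi⟩
  rw [bondStep]
  simp [disp_succ]
  ring

lemma surv_iff_path (y : ℤ) (n : ℕ) :
    Surv y n = {ω : Config | ∃ v : ℤ, OpenPath ω (y, 0) (v, (n : ℤ))} := by
  ext ω
  constructor
  · exact fun h => surv_path h
  · rintro ⟨v, hv⟩
    obtain ⟨n', hn', d, _, hopen⟩ := path_structure hv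
    have : n' = n := by exact_mod_cast hn'.symm
    subst this
    exact ⟨d, hopen⟩


/-- An event is determined by the bonds in `s`. -/
def Det (s : Finset Bond) (E : Set Config) : Prop :=
  ∀ ω ω' : Config, (∀ b ∈ s, ω b = ω' b) → (ω ∈ E ↔ ω' ∈ E)

noncomputable def wt (p : ℝ) (v : Bool) : ENNReal :=
  if v then ENNReal.ofReal p else ENNReal.ofReal (1 - p)

noncomputable def W (p : ℝ) (ω : Config) (s : Finset Bond) : ENNReal :=
  ∏ b ∈ s, wt p (ω b)

/-- Extend a partial configuration by `false`. -/
def ext (s : Finset Bond) (g : s → Bool) : Config :=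
  fun b => if h : b ∈ s then g ⟨b, h⟩ else false

lemma ext_mem {s : Finset Bond} (g : s → Bool) {b : Bond} (h : b ∈ s) :
    ext s g b = g ⟨b, h⟩ := dif_pos h

section Meas

variable {P : Measure Config} [IsProbabilityMeasure P] {p : ℝ}

lemma marginal (hiid : IIDBernoulli P p) (hp : 0 ≤ p) (b : Bond) (v : Bool) : P {ω : Config | ω b = v} = wt p v := by
  cases v with
  | true => simpa [wt] using hiid.1 b
  | false =>
    have hset : {ω : Config | ω b = false} = {ω : Config | ω b = true}ᶜ := by
      ext ω; simp
    have hmeas : MeasurableSet {ω : Config | ω b = true} := by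
      have : {ω : Config | ω b = true} = (fun ω : Config => ω b) ⁻¹' {true} := by
        ext ω; simp
      rw [this]
      exact (measurable_pi_apply b) (measurableSet_singleton true)
    rw [hset, measure_compl hmeas (measure_ne_top _ _), hiid.1 b, measure_univ, wt]
    simp only [Bool.false_eq_true, if_false]
    rw [ENNReal.ofReal_sub _ hp, ENNReal.ofReal_one]

lemma atom (hiid : IIDBernoulli P p) (hp : 0 ≤ p) (s : Finset Bond) (ω₀ : Config) :
    P {ω : Config | ∀ b ∈ s, ω b = ω₀ b} = W p ω₀ s := by
  have hset : {ω : Config | ∀ b ∈ s, ω b = ω₀ b} =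
      ⋂ b ∈ s, {ω : Config | ω b = ω₀ b} := by
    ext ω; simp
  rw [hset]
  have := hiid.2.meas_biInter (S := s) (s := fun b => {ω : Config | ω b = ω₀ b}) ?_
  · rw [this]
    exact Finset.prod_congr rfl fun b _ => marginal hiid hp b (ω₀ b)
  · intro b _
    refine ⟨{ω₀ b}, trivial, ?_⟩
    ext ω; simp


/-- An atom of the finite-dimensional σ-algebra generated by bonds in `s`. -/
def Atom (s : Finset Bond) (g : s → Bool) : Set Config :=
  {ω : Config | ∀ b ∈ s, ω b = ext s g b}

lemma atom_measurable (s : Finset Bond) (ω₀ : Config) :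
    MeasurableSet {ω : Config | ∀ b ∈ s, ω b = ω₀ b} := by
  have hset : {ω : Config | ∀ b ∈ s, ω b = ω₀ b} =
      ⋂ b ∈ s, (fun ω : Config => ω b) ⁻¹' {ω₀ b} := by
    ext ω; simp
  rw [hset]
  exact MeasurableSet.biInter (Finset.countable_toSet s)
    fun b _ => (measurable_pi_apply b) (measurableSet_singleton _)

/-- The measure of an event determined by finitely many bonds equals the sum of the
weights of the atoms contained in it. -/
lemma meas_det (hiid : IIDBernoulli P p) (hp : 0 ≤ p) (s : Finset Bond) (E : Set Config)
    (hE : Det s E) :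
    P E = ∑ g : (s → Bool), Set.indicator E (fun _ => W p (ext s g) s) (ext s g) := by
  classical
  have hcover : E = ⋃ g : (s → Bool), (E ∩ Atom s g) := by
    ext ω
    constructor
    · intro hω
      refine Set.mem_iUnion.2 ⟨fun b => ω b.1, hω, ?_⟩
      intro b hb
      rw [ext_mem _ hb]
    · rintro ⟨Eg, ⟨g, rfl⟩, hω, _⟩
      exact hω
  have hatomE : ∀ (g : s → Bool) (ω : Config), ω ∈ Atom s g → (ω ∈ E ↔ ext s g ∈ E) :=
    fun g ω hω => hE ω (ext s g) hω
  have hpieces1 : ∀ g : (s → Bool), ext s g ∈ E → E ∩ Atom s g = Atom s g := by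
    intro g h
    ext ω
    exact ⟨fun hω => hω.2, fun hω => ⟨(hatomE g ω hω).2 h, hω⟩⟩
  have hpieces2 : ∀ g : (s → Bool), ext s g ∉ E → E ∩ Atom s g = ∅ := by
    intro g h
    ext ω
    simp only [Set.mem_inter_iff, Set.mem_empty_iff_false, iff_false]
    rintro ⟨h1, h2⟩
    exact h ((hatomE g ω h2).1 h1)
  have hdisj : Pairwise (Function.onFun Disjoint fun g : (s → Bool) => E ∩ Atom s g) := by
    intro g g' hgg'
    refine Set.disjoint_left.2 ?_
    rintro ω ⟨_, hω⟩ ⟨_, hω'⟩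
    apply hgg'
    funext b
    rw [← ext_mem g b.2, ← ext_mem g' b.2, ← hω b.1 b.2, ← hω' b.1 b.2]
  have hmeas : ∀ g : (s → Bool), MeasurableSet (E ∩ Atom s g) := by
    intro g
    by_cases h : ext s g ∈ E
    · rw [hpieces1 g h]; exact atom_measurable s (ext s g)
    · rw [hpieces2 g h]; exact MeasurableSet.empty
  conv_lhs => rw [hcover]
  rw [measure_iUnion hdisj hmeas, tsum_fintype]
  refine Finset.sum_congr rfl fun g _ => ?_
  by_cases h : ext s g ∈ E
  · rw [hpieces1 g h, Set.indicator_of_mem h]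
    exact atom hiid hp s (ext s g)
  · rw [hpieces2 g h, Set.indicator_of_notMem h]
    exact measure_empty

/-- Events determined by disjoint finite sets of bonds are independent. -/
lemma indep_det (hiid : IIDBernoulli P p) (hp : 0 ≤ p) (s t : Finset Bond)
    (hst : Disjoint s t) (E F : Set Config) (hE : Det s E) (hF : Det t F) :
    P (E ∩ F) = P E * P F := by
  classical
  have hEF : Det (s ∪ t) (E ∩ F) := by
    intro ω ω' hagree
    have h1 := hE ω ω' fun b hb => hagree b (Finset.mem_union_left _ hb)
    have h2 := hF ω ω' fun b hb => hagree b (Finset.mem_union_right _ hb)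
    exact and_congr h1 h2
  rw [meas_det hiid hp _ _ hEF, meas_det hiid hp _ _ hE, meas_det hiid hp _ _ hF]
  -- the bijection between pairs of partial configurations and configurations on `s ∪ t`
  set Φ : ((s → Bool) × (t → Bool)) → ((s ∪ t : Finset Bond) → Bool) := fun gp b =>
    if h : b.1 ∈ s then gp.1 ⟨b.1, h⟩
    else gp.2 ⟨b.1, (Finset.mem_union.mp b.2).resolve_left h⟩ with hΦ
  have hbij : Function.Bijective Φ := by
    refine Function.bijective_iff_has_inverse.2
      ⟨fun g => (fun b => g ⟨b.1, Finset.mem_union_left _ b.2⟩,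
        fun b => g ⟨b.1, Finset.mem_union_right _ b.2⟩), ?_, ?_⟩
    · rintro ⟨g1, g2⟩
      ext b
      · simp only [hΦ, dif_pos b.2]
      · have hb : b.1 ∉ s := fun h => (Finset.disjoint_left.1 hst h) b.2
        simp only [hΦ, dif_neg hb]
    · intro g
      funext b
      by_cases h : b.1 ∈ s
      · simp only [hΦ, dif_pos h]
      · simp only [hΦ, dif_neg h]
  have key : ∀ gp : ((s → Bool) × (t → Bool)),
      Set.indicator (E ∩ F) (fun _ => W p (ext (s ∪ t) (Φ gp)) (s ∪ t)) (ext (s ∪ t) (Φ gp)) =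
      (Set.indicator E (fun _ => W p (ext s gp.1) s) (ext s gp.1)) *
      (Set.indicator F (fun _ => W p (ext t gp.2) t) (ext t gp.2)) := by
    rintro ⟨g1, g2⟩
    set ωu := ext (s ∪ t) (Φ (g1, g2)) with hωu
    have ha1 : ∀ b ∈ s, ωu b = ext s g1 b := by
      intro b hb
      rw [hωu, ext_mem _ (Finset.mem_union_left _ hb), ext_mem _ hb]
      simp only [hΦ, dif_pos hb]
    have ha2 : ∀ b ∈ t, ωu b = ext t g2 b := by
      intro b hb
      have hbs : b ∉ s := fun h => (Finset.disjoint_left.1 hst h) hb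
      rw [hωu, ext_mem _ (Finset.mem_union_right _ hb), ext_mem _ hb]
      simp only [hΦ, dif_neg hbs]
    have hmE : (ωu ∈ E) ↔ (ext s g1 ∈ E) := hE _ _ ha1
    have hmF : (ωu ∈ F) ↔ (ext t g2 ∈ F) := hF _ _ ha2
    have hW : W p ωu (s ∪ t) = W p (ext s g1) s * W p (ext t g2) t := by
      rw [W, Finset.prod_union hst]
      congr 1
      · exact Finset.prod_congr rfl fun b hb => by rw [ha1 b hb]
      · exact Finset.prod_congr rfl fun b hb => by rw [ha2 b hb]
    by_cases h1 : ext s g1 ∈ E <;> by_cases h2 : ext t g2 ∈ F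
    · rw [Set.indicator_of_mem (show ωu ∈ E ∩ F from ⟨hmE.2 h1, hmF.2 h2⟩),
        Set.indicator_of_mem h1, Set.indicator_of_mem h2, hW]
    · rw [Set.indicator_of_notMem h2,
        Set.indicator_of_notMem (fun h : ωu ∈ E ∩ F => h2 (hmF.1 h.2)), mul_zero]
    · rw [Set.indicator_of_notMem h1,
        Set.indicator_of_notMem (fun h : ωu ∈ E ∩ F => h1 (hmE.1 h.1)), zero_mul]
    · rw [Set.indicator_of_notMem h1,
        Set.indicator_of_notMem (fun h : ωu ∈ E ∩ F => h1 (hmE.1 h.1)), zero_mul]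
  have hsum := (Fintype.sum_bijective Φ hbij
    (fun gp : ((s → Bool) × (t → Bool)) =>
      (Set.indicator E (fun _ => W p (ext s gp.1) s) (ext s gp.1)) *
      (Set.indicator F (fun _ => W p (ext t gp.2) t) (ext t gp.2)))
    (fun g : ((s ∪ t : Finset Bond) → Bool) =>
      Set.indicator (E ∩ F) (fun _ => W p (ext (s ∪ t) g) (s ∪ t)) (ext (s ∪ t) g))
    (fun gp => (key gp).symm)).symm
  refine hsum.trans ?_
  rw [Fintype.sum_prod_type]
  exact (Finset.sum_mul_sum (R := ENNReal) Finset.univ Finset.univ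
    (fun g : (s → Bool) => Set.indicator E (fun _ => W p (ext s g) s) (ext s g))
    (fun g : (t → Bool) => Set.indicator F (fun _ => W p (ext t g) t) (ext t g))).symm

end Meas


end Stmt7
section Part3
open MeasureTheory ProbabilityTheory

namespace Stmt7

/-- The finite set of bonds that an `n`-step path from `(y,0)` can possibly use. -/
noncomputable def B (y : ℤ) (n : ℕ) : Finset Bond :=
  (Finset.range n).biUnion fun i =>
    ((Finset.Icc (y - (i : ℤ)) (y + (i : ℤ))) ×ˢ ({(i : ℤ)} : Finset ℤ)) ×ˢ
      (Finset.univ : Finset Bool)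

lemma mem_B {y : ℤ} {n : ℕ} {b : Bond} :
    b ∈ B y n ↔ ∃ i : ℕ, i < n ∧ b.1.2 = (i : ℤ) ∧ y - i ≤ b.1.1 ∧ b.1.1 ≤ y + i := by
  simp only [B, Finset.mem_biUnion, Finset.mem_range, Finset.mem_product, Finset.mem_Icc,
    Finset.mem_singleton, Finset.mem_univ, and_true]
  constructor
  · rintro ⟨i, hi, ⟨⟨h1, h2⟩, h3⟩⟩
    exact ⟨i, hi, h3, h1, h2⟩
  · rintro ⟨i, hi, h3, h1, h2⟩
    exact ⟨i, hi, ⟨⟨h1, h2⟩, h3⟩⟩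

lemma disp_mem_B {y : ℤ} {n : ℕ} (d : ℕ → Bool) {i : ℕ} (hi : i < n) :
    ((y + disp d i, (i : ℤ)), d i) ∈ B y n := by
  rw [mem_B]
  refine ⟨i, hi, rfl, ?_, ?_⟩ <;>
    · have := abs_le.mp (abs_disp_le d i)
      simp only
      omega

lemma surv_det (y : ℤ) (n : ℕ) : Det (B y n) (Surv y n) := by
  intro ω ω' hagree
  constructor
  · rintro ⟨d, hd⟩
    exact ⟨d, fun i hi => by rw [← hagree _ (disp_mem_B d hi)]; exact hd i hi⟩
  · rintro ⟨d, hd⟩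
    exact ⟨d, fun i hi => by rw [hagree _ (disp_mem_B d hi)]; exact hd i hi⟩

/-- Horizontal shift of a bond. -/
def shiftBond (y : ℤ) (b : Bond) : Bond := ((b.1.1 + y, b.1.2), b.2)

lemma shiftBond_mem {y : ℤ} {n : ℕ} {b : Bond} :
    shiftBond y b ∈ B y n ↔ b ∈ B 0 n := by
  rw [mem_B, mem_B]
  constructor
  · rintro ⟨i, hi, h3, h1, h2⟩
    exact ⟨i, hi, h3, by simp only [shiftBond] at h1 h2 ⊢; omega,
      by simp only [shiftBond] at h1 h2 ⊢; omega⟩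
  · rintro ⟨i, hi, h3, h1, h2⟩
    exact ⟨i, hi, h3, by simp only [shiftBond] at h1 h2 ⊢; omega,
      by simp only [shiftBond] at h1 h2 ⊢; omega⟩

def unshiftBond (y : ℤ) (b : Bond) : Bond := ((b.1.1 - y, b.1.2), b.2)

lemma shift_unshift (y : ℤ) (b : Bond) : shiftBond y (unshiftBond y b) = b := by
  simp [shiftBond, unshiftBond]

lemma unshift_shift (y : ℤ) (b : Bond) : unshiftBond y (shiftBond y b) = b := by
  simp [shiftBond, unshiftBond]

lemma unshiftBond_mem {y : ℤ} {n : ℕ} {b : Bond} (hb : b ∈ B y n) :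
    unshiftBond y b ∈ B 0 n := by
  rw [← shiftBond_mem (y := y), shift_unshift]; exact hb

section Trans

variable {P : Measure Config} [IsProbabilityMeasure P] {p : ℝ}

/-- Translation invariance for the survival events. -/
lemma surv_trans (hiid : IIDBernoulli P p) (hp : 0 ≤ p) (y : ℤ) (n : ℕ) :
    P (Surv y n) = P (Surv 0 n) := by
  classical
  rw [meas_det hiid hp _ _ (surv_det y n), meas_det hiid hp _ _ (surv_det 0 n)]
  set Φ : ({x // x ∈ B y n} → Bool) → ({x // x ∈ B 0 n} → Bool) := fun g b =>
    g ⟨shiftBond y b.1, shiftBond_mem.2 b.2⟩ with hΦ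
  set Ψ : ({x // x ∈ B 0 n} → Bool) → ({x // x ∈ B y n} → Bool) := fun g b =>
    g ⟨unshiftBond y b.1, unshiftBond_mem b.2⟩ with hΨ
  have hbij : Function.Bijective Φ := by
    refine Function.bijective_iff_has_inverse.2 ⟨Ψ, ?_, ?_⟩
    · intro g
      funext b
      simp only [hΦ, hΨ]
      congr 1
      exact Subtype.ext (shift_unshift y b.1)
    · intro g
      funext b
      simp only [hΦ, hΨ]
      congr 1
      exact Subtype.ext (unshift_shift y b.1)
  -- key pointwise fact : the extended configurations correspond under the shift
  have hagree : ∀ g : ({x // x ∈ B y n} → Bool), ∀ b : Bond,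
      ext (B 0 n) (Φ g) b = ext (B y n) g (shiftBond y b) := by
    intro g b
    by_cases hb : b ∈ B 0 n
    · rw [ext_mem _ hb, ext_mem _ (shiftBond_mem.2 hb)]
    · rw [ext, ext, dif_neg hb, dif_neg (fun h => hb (shiftBond_mem.1 h))]
  have key : ∀ g : ({x // x ∈ B y n} → Bool),
      Set.indicator (Surv y n) (fun _ => W p (ext (B y n) g) (B y n)) (ext (B y n) g) =
      Set.indicator (Surv 0 n) (fun _ => W p (ext (B 0 n) (Φ g)) (B 0 n))
        (ext (B 0 n) (Φ g)) := by
    intro g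
    set ω := ext (B y n) g with hωdef
    set ω0 := ext (B 0 n) (Φ g) with hω0def
    have hag : ∀ b : Bond, ω0 b = ω (shiftBond y b) := fun b => hagree g b
    have hmem : ω0 ∈ Surv 0 n ↔ ω ∈ Surv y n := by
      constructor
      · rintro ⟨d, hd⟩
        refine ⟨d, fun i hi => ?_⟩
        have := hd i hi
        rw [hag] at this
        simpa [shiftBond, add_comm] using this
      · rintro ⟨d, hd⟩
        refine ⟨d, fun i hi => ?_⟩
        rw [hag]
        have := hd i hi
        simpa [shiftBond, add_comm] using this
    have hW : W p ω0 (B 0 n) = W p ω (B y n) := by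
      rw [W, W]
      refine Finset.prod_nbij' (fun b => shiftBond y b) (fun b => unshiftBond y b) ?_ ?_ ?_ ?_ ?_
      · intro b hb; exact shiftBond_mem.2 hb
      · intro b hb; exact unshiftBond_mem hb
      · intro b _; exact unshift_shift y b
      · intro b _; exact shift_unshift y b
      · intro b hb
        rw [hag b]
    by_cases h : ω ∈ Surv y n
    · rw [Set.indicator_of_mem h, Set.indicator_of_mem (hmem.2 h), hW]
    · rw [Set.indicator_of_notMem h, Set.indicator_of_notMem (fun h' => h (hmem.1 h'))]
  exact Fintype.sum_bijective Φ hbij _ _ key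

end Trans

end Stmt7
end Part3

section Part4
open MeasureTheory ProbabilityTheory

namespace Stmt7

/-- The event in the statement of the theorem. -/
def Ev (x : ℤ) (m : ℕ) : Set Config :=
  {ω : Config | ∃ y > x, ∃ v k : ℤ, (m : ℤ) ≤ k ∧ (v, k) ∈ Cone x 0 ∧
    OpenPath ω (y, 0) (v, k)}

lemma ev_mono {x : ℤ} {m m' : ℕ} (h : m' ≤ m) : Ev x m ⊆ Ev x m' := by
  rintro ω ⟨y, hy, v, k, hk, hc, hp⟩
  exact ⟨y, hy, v, k, le_trans (by exact_mod_cast h) hk, hc, hp⟩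

lemma ev_subset_union (x : ℤ) (m : ℕ) :
    Ev x m ⊆ ⋃ t : ℕ, Surv (x + 1 + (t : ℤ)) (max m (t / 2 + 1)) := by
  rintro ω ⟨y, hy, v, k, hmk, hcone, hpath⟩
  obtain ⟨n, hkn, d, hv, hopen⟩ := path_structure hpath
  obtain ⟨hk0, habs⟩ := hcone
  have habs' := abs_le.mp habs
  have hdisp := abs_le.mp (abs_disp_le d n)
  -- geometry
  set t : ℕ := (y - x - 1).toNat with ht
  have hyt : y = x + 1 + (t : ℤ) := by
    have : (t : ℤ) = y - x - 1 := Int.toNat_of_nonneg (by omega)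
    omega
  have hmn : m ≤ n := by
    have : (m : ℤ) ≤ (n : ℤ) := by omega
    exact_mod_cast this
  have htn : (t : ℤ) + 1 ≤ 2 * (n : ℤ) := by omega
  have htn' : t + 1 ≤ 2 * n := by exact_mod_cast htn
  have hmax : max m (t / 2 + 1) ≤ n := by
    refine max_le hmn ?_
    omega
  refine Set.mem_iUnion.2 ⟨t, d, fun i hi => ?_⟩
  rw [← hyt]
  exact hopen i (lt_of_lt_of_le hi hmax)

/-- The blocking set : all bonds with bottom site `(v, 0)`, `x < v ≤ x + 2N`. -/
noncomputable def Sblock (x : ℤ) (N : ℕ) : Finset Bond :=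
  ((Finset.Icc (x + 1) (x + 2 * (N : ℤ))) ×ˢ ({(0 : ℤ)} : Finset ℤ)) ×ˢ
    (Finset.univ : Finset Bool)

lemma mem_Sblock {x : ℤ} {N : ℕ} {b : Bond} :
    b ∈ Sblock x N ↔ b.1.2 = 0 ∧ x + 1 ≤ b.1.1 ∧ b.1.1 ≤ x + 2 * (N : ℤ) := by
  simp only [Sblock, Finset.mem_product, Finset.mem_Icc, Finset.mem_singleton,
    Finset.mem_univ, and_true]
  tauto

lemma card_Sblock (x : ℤ) (N : ℕ) : (Sblock x N).card = 4 * N := by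
  rw [Sblock, Finset.card_product, Finset.card_product, Int.card_Icc]
  simp only [Finset.card_singleton, Finset.card_univ, Fintype.card_bool]
  have : (x + 2 * (N : ℤ) + 1 - (x + 1)).toNat = 2 * N := by omega
  rw [this]
  ring

/-- The blocking event: all bonds in `Sblock` are closed. -/
def Gev (x : ℤ) (N : ℕ) : Set Config := {ω : Config | ∀ b ∈ Sblock x N, ω b = false}

lemma Gev_det (x : ℤ) (N : ℕ) : Det (Sblock x N) (Gev x N) := by
  intro ω ω' hagree
  constructor
  · intro h b hb; rw [← hagree b hb]; exact h b hb
  · intro h b hb; rw [hagree b hb]; exact h b hb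

lemma Gev_meas (x : ℤ) (N : ℕ) : MeasurableSet (Gev x N) :=
  atom_measurable (Sblock x N) (fun _ => false)

lemma disjoint_Sblock_B (x : ℤ) (N : ℕ) (t : ℕ) :
    Disjoint (Sblock x N) (B (x + 2 * (N : ℤ) + 1 + (t : ℤ)) (N + 1 + t / 2)) := by
  rw [Finset.disjoint_left]
  intro b hbS hbB
  rw [mem_Sblock] at hbS
  rw [mem_B] at hbB
  obtain ⟨i, _, hlev, h1, h2⟩ := hbB
  have hi0 : (i : ℤ) = 0 := by omega
  have : i = 0 := by exact_mod_cast hi0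
  subst this
  simp only [Nat.cast_zero, sub_zero, add_zero] at h1 h2
  omega

lemma ev_cap_G_subset (x : ℤ) (N : ℕ) :
    Ev x 1 ∩ Gev x N ⊆
      ⋃ t : ℕ, Surv (x + 2 * (N : ℤ) + 1 + (t : ℤ)) (N + 1 + t / 2) := by
  rintro ω ⟨⟨y, hy, v, k, hmk, hcone, hpath⟩, hG⟩
  obtain ⟨n, hkn, d, hv, hopen⟩ := path_structure hpath
  obtain ⟨hk0, habs⟩ := hcone
  have habs' := abs_le.mp habs
  have hdisp := abs_le.mp (abs_disp_le d n)
  have hn1 : 1 ≤ n := by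
    rcases Nat.eq_zero_or_pos n with h | h
    · subst h
      exfalso
      simp only [Nat.cast_zero] at hkn
      omega
    · exact h
  by_cases hyN : y ≤ x + 2 * (N : ℤ)
  · exfalso
    have hb : ((y + disp d 0, ((0 : ℕ) : ℤ)), d 0) ∈ Sblock x N := by
      rw [mem_Sblock, disp_zero]
      simp only [Nat.cast_zero]
      exact ⟨trivial, by omega, by omega⟩
    have h2 := hopen 0 hn1
    rw [hG _ hb] at h2
    exact Bool.false_ne_true h2
  · push_neg at hyN
    set t : ℕ := (y - x - 2 * (N : ℤ) - 1).toNat with ht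
    have hyt : y = x + 2 * (N : ℤ) + 1 + (t : ℤ) := by
      have : (t : ℤ) = y - x - 2 * N - 1 := Int.toNat_of_nonneg (by omega)
      omega
    have h2n : 2 * (N : ℤ) + 1 + t ≤ 2 * n := by omega
    have h2n' : 2 * N + 1 + t ≤ 2 * n := by exact_mod_cast h2n
    have hmax : N + 1 + t / 2 ≤ n := by omega
    refine Set.mem_iUnion.2 ⟨t, d, fun i hi => ?_⟩
    rw [← hyt]
    exact hopen i (lt_of_lt_of_le hi hmax)

end Stmt7
end Part4

section Part5
open MeasureTheory ProbabilityTheory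

namespace Stmt7

lemma pow_anti {x : ENNReal} (hx : x ≤ 1) {k m : ℕ} (h : k ≤ m) : x ^ m ≤ x ^ k := by
  calc x ^ m = x ^ k * x ^ (m - k) := by rw [← pow_add]; congr 1; omega
  _ ≤ x ^ k * 1 := mul_le_mul_right (pow_le_one' hx _) _
  _ = x ^ k := mul_one _

lemma tsum_quarter (x : ENNReal) : ∑' t : ℕ, x ^ (t / 4) = 4 * (1 - x)⁻¹ := by
  have h1 : ∑' t : ℕ, x ^ (t / 4) =
      ∑' q : ℕ × Fin 4, x ^ (((Nat.divModEquiv 4).symm q : ℕ) / 4) :=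
    (Equiv.tsum_eq (Nat.divModEquiv 4).symm (fun t : ℕ => x ^ (t / 4))).symm
  rw [h1]
  have h2 : ∀ q : ℕ × Fin 4, x ^ (((Nat.divModEquiv 4).symm q : ℕ) / 4) = x ^ q.1 := by
    rintro ⟨u, r⟩
    have hr : (r : ℕ) < 4 := r.isLt
    have : (((Nat.divModEquiv 4).symm (u, r) : ℕ)) = u * 4 + (r : ℕ) := rfl
    rw [this]
    congr 1
    omega
  rw [tsum_congr h2, ENNReal.tsum_prod']
  have h3 : ∀ u : ℕ, ∑' _ : Fin 4, x ^ u = 4 * x ^ u := by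
    intro u
    rw [tsum_fintype]
    simp [Finset.sum_const, mul_comm]
  calc ∑' (u : ℕ) (_ : Fin 4), x ^ u = ∑' u : ℕ, 4 * x ^ u := tsum_congr h3
  _ = 4 * ∑' u : ℕ, x ^ u := ENNReal.tsum_mul_left
  _ = 4 * (1 - x)⁻¹ := by rw [ENNReal.tsum_geometric]

end Stmt7
end Part5

open Real in
/-- Lemma 3.1: if the survival probability from a single site decays
exponentially, `P(ξ⁰_n ≠ ∅) ≤ exp (-β n)`, then there is `β' > 0` (depending only on `β`,
i.e. chosen uniformly in `x` and `m`) such that the probability that some site `(y,0)` with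
`y > x` is connected to `C_{x,0} ∩ ⋃_{j ≥ m} L_j` is at most `exp (-β' m)`. -/
theorem stmt7 (p : ℝ) (hp0 : 0 < p) (hp1 : p < 1)
    (P : Measure Config) [IsProbabilityMeasure P] (hiid : IIDBernoulli P p)
    (β : ℝ) (hβ : 0 < β)
    (hdecay : ∀ n : ℕ,
      P {ω : Config | ∃ y : ℤ, OpenPath ω (0, 0) (y, (n : ℤ))}
        ≤ ENNReal.ofReal (Real.exp (-β * n))) :
    ∃ β' > (0 : ℝ), ∀ x : ℤ, Even x → ∀ m : ℕ,
      P {ω : Config | ∃ y > x, ∃ v k : ℤ, (m : ℤ) ≤ k ∧ (v, k) ∈ Cone x 0 ∧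
          OpenPath ω (y, 0) (v, k)}
        ≤ ENNReal.ofReal (Real.exp (-β' * m)) := by
  classical
  have hp0' : (0 : ℝ) ≤ p := hp0.le
  set r : ℝ := Real.exp (-β) with hr
  have hr0 : 0 < r := Real.exp_pos _
  have hr1 : r < 1 := Real.exp_lt_one_iff.2 (by linarith)
  set x0 : ENNReal := ENNReal.ofReal r with hx0
  have hx0le1 : x0 ≤ 1 := ENNReal.ofReal_le_one.2 hr1.le
  -- the basic exponential bound on survival events
  have survb : ∀ (y : ℤ) (n : ℕ), P (Stmt7.Surv y n) ≤ x0 ^ n := by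
    intro y n
    rw [Stmt7.surv_trans hiid hp0' y n, Stmt7.surv_iff_path]
    refine (hdecay n).trans_eq ?_
    rw [hx0, ← ENNReal.ofReal_pow (Real.exp_nonneg _)]
    congr 1
    rw [← Real.exp_nat_mul]
    congr 1
    ring
  set K : ENNReal := 4 * (1 - x0)⁻¹ with hK
  -- union bound for the main event
  have hEv : ∀ (x : ℤ) (m : ℕ), P (Stmt7.Ev x m) ≤ x0 ^ (m / 2) * K := by
    intro x m
    refine le_trans (measure_mono (Stmt7.ev_subset_union x m)) ?_
    refine le_trans (measure_iUnion_le _) ?_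
    refine le_trans (ENNReal.tsum_le_tsum (fun t => le_trans (survb _ _)
      (Stmt7.pow_anti hx0le1 (show m / 2 + t / 4 ≤ max m (t / 2 + 1) by
        rcases le_total m (t / 2 + 1) with h | h
        · rw [max_eq_right h]; omega
        · rw [max_eq_left h]; omega)))) ?_
    calc ∑' t : ℕ, x0 ^ (m / 2 + t / 4)
        = ∑' t : ℕ, x0 ^ (m / 2) * x0 ^ (t / 4) := tsum_congr fun t => pow_add x0 _ _
      _ = x0 ^ (m / 2) * ∑' t : ℕ, x0 ^ (t / 4) := ENNReal.tsum_mul_left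
      _ = x0 ^ (m / 2) * K := by rw [Stmt7.tsum_quarter, ← hK]
      _ ≤ x0 ^ (m / 2) * K := le_rfl
  -- real version of the constant K
  set KR : ℝ := 4 * (1 - r)⁻¹ with hKR
  have h1r : (0 : ℝ) < 1 - r := by linarith
  have hKR0 : 0 < KR := by positivity
  have hKenn : K = ENNReal.ofReal KR := by
    rw [hK, hKR]
    rw [show (1 : ENNReal) - x0 = ENNReal.ofReal (1 - r) by
      rw [hx0, ENNReal.ofReal_sub _ hr0.le, ENNReal.ofReal_one]]
    rw [ENNReal.ofReal_mul (by norm_num : (0:ℝ) ≤ 4), ENNReal.ofReal_inv_of_pos h1r]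
    congr 1
    norm_num
  -- choose N making the far tail small
  obtain ⟨N, hN⟩ := exists_pow_lt_of_lt_one (show (0:ℝ) < (2 * KR)⁻¹ by positivity) hr1
  have hNhalf : r ^ N * KR ≤ 1 / 2 := by
    have h := mul_le_mul_of_nonneg_right hN.le hKR0.le
    have h2 : (2 * KR)⁻¹ * KR = 1 / 2 := by
      field_simp
    rw [h2] at h
    exact h
  -- the one-step constant δ
  set q4 : ℝ := (1 - p) ^ (4 * N) with hq4
  have hq40 : 0 < q4 := pow_pos (by linarith) _
  have hq41 : q4 ≤ 1 := pow_le_one₀ (by linarith) (by linarith)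
  set δR : ℝ := 1 - q4 / 2 with hδR
  have hδ0 : 0 < δR := by rw [hδR]; linarith
  have hδ1 : δR < 1 := by rw [hδR]; linarith
  -- the cutoff M
  set MR : ℝ := 2 + 4 * Real.log KR / β with hMR
  set M : ℕ := Nat.ceil MR + 2 with hM
  have hM1 : 1 ≤ M := by omega
  have hMMR : MR ≤ (M : ℝ) := by
    rw [hM]
    push_cast
    have := Nat.le_ceil MR
    linarith
  -- the final exponent
  set β' : ℝ := min (β / 4) ((-Real.log δR) / M) with hβ'
  have hlogδ : Real.log δR < 0 := Real.log_neg hδ0 hδ1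
  have hβ'0 : 0 < β' := by
    rw [hβ']
    refine lt_min (by linarith) ?_
    have hMpos : (0:ℝ) < (M:ℝ) := by exact_mod_cast hM1
    exact div_pos (by linarith) hMpos
  refine ⟨β', hβ'0, ?_⟩
  intro x _hx m
  show P (Stmt7.Ev x m) ≤ ENNReal.ofReal (Real.exp (-β' * m))
  rcases Nat.eq_zero_or_pos m with hm0 | hm1
  · subst hm0
    simp only [Nat.cast_zero, mul_zero, Real.exp_zero, ENNReal.ofReal_one]
    exact prob_le_one
  -- the bound `P (Ev x 1) ≤ δR`
  have hδbound : P (Stmt7.Ev x 1) ≤ ENNReal.ofReal δR := by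
    have hc : P (Stmt7.Gev x N) = ENNReal.ofReal q4 := by
      have := Stmt7.atom hiid hp0' (Stmt7.Sblock x N) (fun _ => false)
      rw [show {ω : Config | ∀ b ∈ Stmt7.Sblock x N, ω b = (fun _ => false) b} =
        Stmt7.Gev x N from rfl] at this
      rw [this, Stmt7.W, Finset.prod_const, Stmt7.card_Sblock]
      rw [show Stmt7.wt p false = ENNReal.ofReal (1 - p) from rfl]
      rw [← ENNReal.ofReal_pow (by linarith)]
    -- decomposition
    have hsub : Stmt7.Ev x 1 ⊆ (Stmt7.Gev x N)ᶜ ∪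
        ⋃ t : ℕ, (Stmt7.Gev x N ∩
          Stmt7.Surv (x + 2 * (N : ℤ) + 1 + (t : ℤ)) (N + 1 + t / 2)) := by
      intro ω hω
      by_cases hg : ω ∈ Stmt7.Gev x N
      · obtain ⟨t, hmem⟩ := Set.mem_iUnion.1 (Stmt7.ev_cap_G_subset x N ⟨hω, hg⟩)
        exact Or.inr (Set.mem_iUnion.2 ⟨t, hg, hmem⟩)
      · exact Or.inl hg
    have htail : ∑' t : ℕ,
        P (Stmt7.Surv (x + 2 * (N : ℤ) + 1 + (t : ℤ)) (N + 1 + t / 2)) ≤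
        ENNReal.ofReal (1 / 2) := by
      refine le_trans (ENNReal.tsum_le_tsum (fun t => le_trans (survb _ _)
        (Stmt7.pow_anti hx0le1 (show N + t / 4 ≤ N + 1 + t / 2 by omega)))) ?_
      calc ∑' t : ℕ, x0 ^ (N + t / 4)
          = ∑' t : ℕ, x0 ^ N * x0 ^ (t / 4) := tsum_congr fun t => pow_add x0 _ _
        _ = x0 ^ N * ∑' t : ℕ, x0 ^ (t / 4) := ENNReal.tsum_mul_left
        _ = x0 ^ N * K := by rw [Stmt7.tsum_quarter, ← hK]
        _ = ENNReal.ofReal (r ^ N * KR) := by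
            rw [hKenn, hx0, ← ENNReal.ofReal_pow hr0.le,
              ← ENNReal.ofReal_mul (pow_nonneg hr0.le _)]
        _ ≤ ENNReal.ofReal (1 / 2) := ENNReal.ofReal_le_ofReal hNhalf
    calc P (Stmt7.Ev x 1)
        ≤ P ((Stmt7.Gev x N)ᶜ) + P (⋃ t : ℕ, (Stmt7.Gev x N ∩
            Stmt7.Surv (x + 2 * (N : ℤ) + 1 + (t : ℤ)) (N + 1 + t / 2))) :=
          le_trans (measure_mono hsub) (measure_union_le _ _)
      _ ≤ (1 - ENNReal.ofReal q4) + ∑' t : ℕ, P (Stmt7.Gev x N ∩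
            Stmt7.Surv (x + 2 * (N : ℤ) + 1 + (t : ℤ)) (N + 1 + t / 2)) := by
          refine add_le_add ?_ (measure_iUnion_le _)
          rw [measure_compl (Stmt7.Gev_meas x N) (measure_ne_top _ _), hc, measure_univ]
      _ = (1 - ENNReal.ofReal q4) + ∑' t : ℕ, (ENNReal.ofReal q4) *
            P (Stmt7.Surv (x + 2 * (N : ℤ) + 1 + (t : ℤ)) (N + 1 + t / 2)) := by
          congr 1
          refine tsum_congr fun t => ?_
          rw [Stmt7.indep_det hiid hp0' _ _ (Stmt7.disjoint_Sblock_B x N t) _ _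
            (Stmt7.Gev_det x N) (Stmt7.surv_det _ _), hc]
      _ = (1 - ENNReal.ofReal q4) + (ENNReal.ofReal q4) * ∑' t : ℕ,
            P (Stmt7.Surv (x + 2 * (N : ℤ) + 1 + (t : ℤ)) (N + 1 + t / 2)) := by
          rw [ENNReal.tsum_mul_left]
      _ ≤ (1 - ENNReal.ofReal q4) + (ENNReal.ofReal q4) * ENNReal.ofReal (1 / 2) :=
          add_le_add le_rfl (mul_le_mul_right htail _)
      _ = ENNReal.ofReal δR := by
          rw [← ENNReal.ofReal_one, ← ENNReal.ofReal_sub _ hq40.le,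
            ← ENNReal.ofReal_mul hq40.le, ← ENNReal.ofReal_add (by linarith) (by positivity)]
          congr 1
          rw [hδR]
          ring
  by_cases hmM : M ≤ m
  · -- large m : use the union bound
    refine le_trans (hEv x m) ?_
    rw [hKenn, hx0, ← ENNReal.ofReal_pow hr0.le,
      ← ENNReal.ofReal_mul (pow_nonneg hr0.le _)]
    refine ENNReal.ofReal_le_ofReal ?_
    -- real inequality
    have hmR : (M : ℝ) ≤ (m : ℝ) := by exact_mod_cast hmM
    have ha : ((m : ℝ) - 1) / 2 ≤ ((m / 2 : ℕ) : ℝ) := by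
      have h2 : m - 1 ≤ 2 * (m / 2) := by omega
      have h2' : (m : ℝ) - 1 ≤ 2 * ((m / 2 : ℕ) : ℝ) := by
        have := (Nat.cast_le (α := ℝ)).2 h2
        push_cast at this
        rw [Nat.cast_sub hm1] at this
        push_cast at this
        linarith
      linarith
    have hrp : r ^ (m / 2) = Real.exp (((m / 2 : ℕ) : ℝ) * (-β)) := by
      rw [Real.exp_nat_mul]
    have hlogKR : Real.log KR ≤ β * ((m : ℝ) - 2) / 4 := by
      have h4 : 4 * Real.log KR / β ≤ (m : ℝ) - 2 := by
        rw [hMR] at hMMR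
        linarith
      have h5 : 4 * Real.log KR ≤ ((m : ℝ) - 2) * β := (div_le_iff₀ hβ).1 h4
      linarith
    have hKRle : KR ≤ Real.exp (β * ((m : ℝ) - 2) / 4) :=
      (Real.log_le_iff_le_exp hKR0).1 hlogKR
    calc r ^ (m / 2) * KR
        ≤ Real.exp (((m / 2 : ℕ) : ℝ) * (-β)) * Real.exp (β * ((m : ℝ) - 2) / 4) := by
          rw [hrp]
          exact mul_le_mul_of_nonneg_left hKRle (Real.exp_nonneg _)
      _ = Real.exp (((m / 2 : ℕ) : ℝ) * (-β) + β * ((m : ℝ) - 2) / 4) := by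
          rw [← Real.exp_add]
      _ ≤ Real.exp (-β' * m) := by
          refine Real.exp_le_exp.2 ?_
          have hβ'le : β' ≤ β / 4 := min_le_left _ _
          have h6 : β' * m ≤ (β / 4) * m :=
            mul_le_mul_of_nonneg_right hβ'le (by positivity)
          have h7 : (((m : ℝ) - 1) / 2) * β ≤ ((m / 2 : ℕ) : ℝ) * β :=
            mul_le_mul_of_nonneg_right ha hβ.le
          nlinarith
  · -- small m : use monotonicity and the δ bound
    push_neg at hmM
    calc P (Stmt7.Ev x m) ≤ P (Stmt7.Ev x 1) := measure_mono (Stmt7.ev_mono hm1)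
      _ ≤ ENNReal.ofReal δR := hδbound
      _ ≤ ENNReal.ofReal (Real.exp (-β' * m)) := by
          refine ENNReal.ofReal_le_ofReal ?_
          rw [show δR = Real.exp (Real.log δR) from (Real.exp_log hδ0).symm]
          refine Real.exp_le_exp.2 ?_
          have hβ'le : β' ≤ (-Real.log δR) / M := min_le_right _ _
          have hMpos : (0:ℝ) < (M:ℝ) := by exact_mod_cast hM1
          have hmMR : (m : ℝ) ≤ (M : ℝ) := by exact_mod_cast hmM.le
          have h8 : β' * m ≤ ((-Real.log δR) / M) * M := by
            refine mul_le_mul hβ'le hmMR (by positivity) ?_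
            exact le_of_lt (div_pos (by linarith) hMpos)
          rw [div_mul_cancel₀ _ hMpos.ne'] at h8
          linarith
end

section
/- Let $\gamma$ be a fixed oriented path in $\Lambda$ from $(x,r)$ to level $L_n$, and let $\Gamma_r$ denote the rightmost open path from $(x,r)$ to $L_n$ (when one exists). Then the event $\{\Gamma_r = \gamma\}$ equals the intersection of the event $\{\gamma \text{ is open}\}$ with a decreasing event $D(\gamma)$ measurable with respect to the bonds of the graph $A_{\gamma,r}$ consisting of bonds between levels $r$ and $n$ having at least one endpoint strictly to the right of $\gamma$. -/
open MeasureTheory ProbabilityTheory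

/-- `γ` describes an oriented path in `Λ` starting at `(x, r)` and ending at level `n`:
`γ i` is the horizontal position at level `r + i`, for `0 ≤ i ≤ n - r`. -/
def IsPathFrom (x : ℤ) (r n : ℕ) (γ : ℕ → ℤ) : Prop :=
  γ 0 = x ∧ ∀ i < n - r, γ (i + 1) - γ i = 1 ∨ γ (i + 1) - γ i = -1

/-- All the bonds of the path `γ` (from level `r` to level `n`) are open in `ω`. -/
def PathOpen (ω : Config) (r n : ℕ) (γ : ℕ → ℤ) : Prop :=
  ∀ i < n - r, ∃ d : Bool,
    bondStep (γ i, (r : ℤ) + i) d = (γ (i + 1), (r : ℤ) + i + 1) ∧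
      ω ((γ i, (r : ℤ) + i), d) = true

/-- The site `s` lies in levels `r,…,n` strictly to the right of the path `γ`. -/
def StrictRight (γ : ℕ → ℤ) (r n : ℕ) (s : Site) : Prop :=
  (r : ℤ) ≤ s.2 ∧ s.2 ≤ (n : ℤ) ∧ γ (s.2 - r).toNat < s.1

/-- The graph `A_{γ,r}`: bonds with both endpoints in levels `r,…,n`, at least one of
which lies strictly to the right of `γ`. -/
def rightBonds (γ : ℕ → ℤ) (r n : ℕ) : Set Bond :=
  {b : Bond | (r : ℤ) ≤ b.1.2 ∧ (bondStep b.1 b.2).2 ≤ (n : ℤ) ∧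
    (StrictRight γ r n b.1 ∨ StrictRight γ r n (bondStep b.1 b.2))}

/-- The event `D` depends only on the states of the bonds in `Bs`. -/
def DependsOnlyOn (D : Set Config) (Bs : Set Bond) : Prop :=
  ∀ ω ω' : Config, (∀ b ∈ Bs, ω b = ω' b) → (ω ∈ D ↔ ω' ∈ D)

/-- The event `D` is decreasing: closed under switching bonds from open to closed. -/
def DecreasingEvent (D : Set Config) : Prop :=
  ∀ ω ω' : Config, ω ∈ D → (∀ b, ω' b ≤ ω b) → ω' ∈ D

/-- `γ` is the rightmost open path from `(x, r)` to level `n` in `ω`: it is open, and any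
open path from `(x, r)` to level `n` lies weakly to its left at every level. -/
def IsRightmostOpenPath (ω : Config) (x : ℤ) (r n : ℕ) (γ : ℕ → ℤ) : Prop :=
  IsPathFrom x r n γ ∧ PathOpen ω r n γ ∧
    ∀ γ' : ℕ → ℤ, IsPathFrom x r n γ' → PathOpen ω r n γ' →
      ∀ i ≤ n - r, γ' i ≤ γ i

section Stmt9Aux

/-- Force the bonds of `γ` open. -/
noncomputable def force (γ : ℕ → ℤ) (r n : ℕ) (ω : Config) : Config :=
  fun b => if (∃ i, i < n - r ∧ b = ((γ i, (r:ℤ) + i), decide (γ (i+1) - γ i = 1)))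
    then true else ω b

lemma bondStep_dir {a b L : ℤ} (h : b - a = 1 ∨ b - a = -1) :
    bondStep (a, L) (decide (b - a = 1)) = (b, L + 1) := by
  rcases h with h | h <;> simp [bondStep, h] <;> omega

lemma dir_of_bondStep {a b L L' : ℤ} {d : Bool}
    (h : bondStep (a, L) d = (b, L')) :
    d = decide (b - a = 1) ∧ (b - a = 1 ∨ b - a = -1) ∧ L' = L + 1 := by
  cases d <;> simp [bondStep, Prod.ext_iff] at h <;>
    refine ⟨by simp [← h.1], by omega, by omega⟩

lemma force_of_self {γ : ℕ → ℤ} {r n : ℕ} {ω : Config} {b : Bond}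
    (hγo : PathOpen ω r n γ) (h : force γ r n ω b = true) : ω b = true := by
  unfold force at h
  split at h
  · rename_i hmem
    obtain ⟨i, hi, rfl⟩ := hmem
    obtain ⟨d, hbs, hval⟩ := hγo i hi
    obtain ⟨hd, _, _⟩ := dir_of_bondStep hbs
    rwa [← hd]
  · exact h

lemma le_force {γ : ℕ → ℤ} {r n : ℕ} {ω : Config} {b : Bond}
    (h : ω b = true) : force γ r n ω b = true := by
  unfold force; split <;> simp [h]

lemma parity {x : ℤ} {r n : ℕ} {γ : ℕ → ℤ} (hγ : IsPathFrom x r n γ) :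
    ∀ i, i ≤ n - r → (2:ℤ) ∣ γ i - x - i := by
  intro i
  induction i with
  | zero => intro _; simp [hγ.1]
  | succ i ih =>
    intro hi
    have h1 := ih (by omega)
    have h2 := hγ.2 i (by omega)
    push_cast
    omega

lemma max_isPath {x : ℤ} {r n : ℕ} {γ γ'' : ℕ → ℤ}
    (hγ : IsPathFrom x r n γ) (hγ'' : IsPathFrom x r n γ'') :
    IsPathFrom x r n (fun i => max (γ i) (γ'' i)) := by
  refine ⟨by simp [hγ.1, hγ''.1], fun i hi => ?_⟩
  have p1 := parity hγ i (by omega)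
  have p2 := parity hγ'' i (by omega)
  have s1 := hγ.2 i hi
  have s2 := hγ''.2 i hi
  simp only
  rcases max_cases (γ i) (γ'' i) with ⟨hm, hc⟩ | ⟨hm, hc⟩ <;>
    rcases max_cases (γ (i+1)) (γ'' (i+1)) with ⟨hm', hc'⟩ | ⟨hm', hc'⟩ <;>
      rw [hm, hm'] <;> omega

lemma max_path_open {x : ℤ} {r n : ℕ} {γ γ'' : ℕ → ℤ} {ω : Config}
    (hγ : IsPathFrom x r n γ) (hγ'' : IsPathFrom x r n γ'')
    (h2 : PathOpen ω r n γ'') :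
    PathOpen (force γ r n ω) r n (fun i => max (γ i) (γ'' i)) := by
  intro i hi
  have p1 := parity hγ i (by omega)
  have p2 := parity hγ'' i (by omega)
  have p1' := parity hγ (i+1) (by omega)
  have p2' := parity hγ'' (i+1) (by omega)
  have s1 := hγ.2 i hi
  have s2 := hγ''.2 i hi
  simp only
  by_cases hA : γ i ≤ γ'' i ∧ γ (i+1) ≤ γ'' (i+1)
  · -- use the γ'' bond
    rw [max_eq_right hA.1, max_eq_right hA.2]
    obtain ⟨d, hbs, hval⟩ := h2 i hi
    exact ⟨d, hbs, le_force hval⟩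
  · -- use the γ bond
    rcases not_and_or.mp hA with hB | hB <;> push_neg at hB
    · have h1 : γ'' i ≤ γ i := le_of_lt hB
      have h2' : γ'' (i+1) ≤ γ (i+1) := by omega
      rw [max_eq_left h1, max_eq_left h2']
      refine ⟨decide (γ (i+1) - γ i = 1), bondStep_dir s1, ?_⟩
      unfold force
      rw [if_pos ⟨i, hi, rfl⟩]
    · have h2' : γ'' (i+1) ≤ γ (i+1) := le_of_lt hB
      have h1 : γ'' i ≤ γ i := by omega
      rw [max_eq_left h1, max_eq_left h2']
      refine ⟨decide (γ (i+1) - γ i = 1), bondStep_dir s1, ?_⟩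
      unfold force
      rw [if_pos ⟨i, hi, rfl⟩]

/-- Any bond of a path `γ'` lying weakly right of `γ` is either a `γ`-bond or in
`rightBonds γ r n`; in either case `force γ r n ω` agrees for configs agreeing on
`rightBonds`. -/
lemma force_agree {x : ℤ} {r n : ℕ} {γ γ' : ℕ → ℤ} {ω ω' : Config}
    (hrn : r ≤ n)
    (hγ' : IsPathFrom x r n γ')
    (hge : ∀ i ≤ n - r, γ i ≤ γ' i)
    (hagree : ∀ b ∈ rightBonds γ r n, ω b = ω' b) :
    PathOpen (force γ r n ω) r n γ' → PathOpen (force γ r n ω') r n γ' := by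
  intro hop i hi
  obtain ⟨d, hbs, hval⟩ := hop i hi
  refine ⟨d, hbs, ?_⟩
  obtain ⟨hd, hdiff, -⟩ := dir_of_bondStep hbs
  by_cases hcase : γ' i = γ i ∧ γ' (i+1) = γ (i+1)
  · -- it is the γ bond
    unfold force
    rw [if_pos ⟨i, hi, by rw [hd, hcase.1, hcase.2]⟩]
  · -- it is in rightBonds
    have hb : ((γ' i, (r:ℤ) + i), d) ∈ rightBonds γ r n := by
      have hge1 := hge i (by omega)
      have hge2 := hge (i+1) (by omega)
      have hrin : (r:ℕ) + i + 1 ≤ n := by omega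
      simp only [rightBonds, StrictRight, Set.mem_setOf_eq, hbs]
      have e1 : (((r:ℤ) + i) - r).toNat = i := by omega
      have e2 : (((r:ℤ) + i + 1) - r).toNat = i + 1 := by omega
      rw [e1, e2]
      refine ⟨by omega, by push_cast; omega, ?_⟩
      rcases lt_or_eq_of_le hge1 with hlt | heq
      · exact Or.inl ⟨by omega, by push_cast; omega, hlt⟩
      · have hlt2 : γ (i+1) < γ' (i+1) := by
          rcases lt_or_eq_of_le hge2 with h | h
          · exact h
          · exact absurd ⟨heq.symm, h.symm⟩ hcase
        exact Or.inr ⟨by push_cast; omega, by push_cast; omega, hlt2⟩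
    unfold force at hval ⊢
    split at hval
    · rename_i hmem; rw [if_pos hmem]
    · rename_i hmem; rw [if_neg hmem, ← hagree _ hb]; exact hval

lemma force_mono {γ : ℕ → ℤ} {r n : ℕ} {ω ω' : Config}
    (hle : ∀ b, ω' b ≤ ω b) (b : Bond) :
    force γ r n ω' b = true → force γ r n ω b = true := by
  intro h
  unfold force at h ⊢
  by_cases hc : (∃ i, i < n - r ∧ b = ((γ i, (r:ℤ) + i), decide (γ (i+1) - γ i = 1)))
  · rw [if_pos hc]
  · rw [if_neg hc] at h ⊢
    have hlb := hle b
    cases hωb : ω b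
    · rw [h, hωb] at hlb; exact absurd hlb (by decide)
    · rfl

end Stmt9Aux

/-- for a fixed path `γ` from `(x, r)` to level `n`, the event
`{Γ_r = γ}` (that `γ` is the rightmost open path from `(x, r)` to `L_n`) is the
intersection of `{γ is open}` with a decreasing event `D(γ)` depending only on the
bonds of `A_{γ,r}`. -/
theorem stmt9 (x : ℤ) (r n : ℕ) (hrn : r ≤ n) (γ : ℕ → ℤ) (hγ : IsPathFrom x r n γ) :
    ∃ D : Set Config, DependsOnlyOn D (rightBonds γ r n) ∧ DecreasingEvent D ∧
      ∀ ω : Config, IsRightmostOpenPath ω x r n γ ↔ (PathOpen ω r n γ ∧ ω ∈ D) := by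
  refine ⟨{ω | ∀ γ' : ℕ → ℤ, IsPathFrom x r n γ' → (∀ i ≤ n - r, γ i ≤ γ' i) →
      PathOpen (force γ r n ω) r n γ' → ∀ i ≤ n - r, γ' i ≤ γ i}, ?_, ?_, ?_⟩
  · -- DependsOnlyOn
    intro ω ω' hagree
    constructor
    · intro hD γ' hp hge hop
      exact hD γ' hp hge (force_agree hrn hp hge (fun b hb => (hagree b hb).symm) hop)
    · intro hD γ' hp hge hop
      exact hD γ' hp hge (force_agree hrn hp hge hagree hop)
  · -- Decreasing
    intro ω ω' hD hle γ' hp hge hop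
    exact hD γ' hp hge (fun i hi => by
      obtain ⟨d, hbs, hval⟩ := hop i hi
      exact ⟨d, hbs, force_mono hle _ hval⟩)
  · intro ω
    constructor
    · rintro ⟨h1, h2, h3⟩
      refine ⟨h2, fun γ' hp hge hop i hi => ?_⟩
      refine h3 γ' hp (fun j hj => ?_) i hi
      obtain ⟨d, hbs, hval⟩ := hop j hj
      exact ⟨d, hbs, force_of_self h2 hval⟩
    · rintro ⟨hopen, hD⟩
      refine ⟨hγ, hopen, fun γ'' hp'' hop'' i hi => ?_⟩
      have := hD (fun i => max (γ i) (γ'' i)) (max_isPath hγ hp'')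
        (fun j _ => le_max_left _ _) (max_path_open hγ hp'' hop'') i hi
      exact le_trans (le_max_right _ _) this
end

section
/- For oriented percolation on $\Lambda$ with $p<p_c$ (so that $P(\xi^{\{x\}}_n\neq\emptyset)\leq e^{-\beta n}$), let $f$ be a bounded cylinder function on subsets of $2\mathbb{Z}_-$ depending only on coordinates $-2r,\dots,-2$. Then for any subset $A'$ of $2\mathbb{Z}_-$ containing $0$, $\left|E\big(f(\zeta^{A'}_n)\,\big|\,0\to L_n\big) - E\big(f(\zeta^{0}_n)\,\big|\,0\to L_n\big)\right| \leq 2(n+r)\|f\|e^{-\beta n}$ for all $n$. -/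
open MeasureTheory ProbabilityTheory

/-- The set of sites at level `n` reachable from `A × {0}` by open oriented paths. -/
def xi (ω : Config) (A : Set ℤ) (n : ℕ) : Set ℤ :=
  {y : ℤ | ∃ x ∈ A, OpenPath ω (x, 0) (y, (n : ℤ))}

/-- The configuration at level `n` seen from its rightmost point. -/
noncomputable def zeta (ω : Config) (A : Set ℤ) (n : ℕ) : Set ℤ :=
  (fun z => z - sSup (xi ω A n)) '' xi ω A n

namespace Perc

/-- The deterministic path started at `a` with direction sequence `d`. -/
def pathFrom (a : Site) (d : ℕ → Bool) : ℕ → Site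
  | 0 => a
  | i + 1 => bondStep (pathFrom a d i) (d i)

@[simp] lemma pathFrom_zero (a : Site) (d : ℕ → Bool) : pathFrom a d 0 = a := rfl

lemma pathFrom_level (a : Site) (d : ℕ → Bool) (i : ℕ) :
    (pathFrom a d i).2 = a.2 + i := by
  induction i with
  | zero => simp
  | succ i ih => simp [pathFrom, bondStep, ih]; ring

lemma pathFrom_fst_le (a : Site) (d : ℕ → Bool) (i : ℕ) :
    (pathFrom a d i).1 ≤ a.1 + i := by
  induction i with
  | zero => simp
  | succ i ih =>
    simp only [pathFrom, bondStep]
    have : ((if d i then (1:ℤ) else -1)) ≤ 1 := by split <;> omega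
    push_cast; omega

lemma le_pathFrom_fst (a : Site) (d : ℕ → Bool) (i : ℕ) :
    a.1 - i ≤ (pathFrom a d i).1 := by
  induction i with
  | zero => simp
  | succ i ih =>
    simp only [pathFrom, bondStep]
    have : (-1:ℤ) ≤ (if d i then (1:ℤ) else -1) := by split <;> omega
    push_cast; omega

lemma pathFrom_congr (a : Site) {d d' : ℕ → Bool} (i : ℕ)
    (h : ∀ j < i, d j = d' j) : pathFrom a d i = pathFrom a d' i := by
  induction i with
  | zero => rfl
  | succ i ih =>
    have h1 : pathFrom a d i = pathFrom a d' i := ih (fun j hj => h j (by omega))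
    simp [pathFrom, h1, h i (by omega)]

lemma openPath_of_pathFrom {ω : Config} {a : Site} {d : ℕ → Bool} {k : ℕ}
    (h : ∀ i < k, ω (pathFrom a d i, d i) = true) :
    OpenPath ω a (pathFrom a d k) :=
  ⟨k, pathFrom a d, rfl, rfl, fun i hi => ⟨d i, rfl, h i hi⟩⟩

lemma openPath_iff_pathFrom {ω : Config} {a b : Site} :
    OpenPath ω a b ↔ ∃ (k : ℕ) (d : ℕ → Bool), pathFrom a d k = b ∧
      ∀ i < k, ω (pathFrom a d i, d i) = true := by
  constructor
  · rintro ⟨k, γ, h0, hk, hstep⟩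
    classical
    let d : ℕ → Bool := fun i => if h : ∃ dd : Bool, bondStep (γ i) dd = γ (i+1) ∧ ω (γ i, dd) = true
      then Classical.choose h else true
    have key : ∀ i ≤ k, pathFrom a d i = γ i := by
      intro i hi
      induction i with
      | zero => simp [h0.symm]
      | succ i ih =>
        have hik : i < k := by omega
        have hex := hstep i hik
        have hpf : pathFrom a d i = γ i := ih (by omega)
        have hd : d i = Classical.choose hex := by
          simp only [d, dif_pos hex]
        have hspec := Classical.choose_spec hex
        simp only [pathFrom, hpf, hd]
        exact hspec.1
    refine ⟨k, d, by rw [key k le_rfl, hk], fun i hi => ?_⟩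
    have hex := hstep i hi
    have hd : d i = Classical.choose hex := by simp only [d, dif_pos hex]
    rw [key i (le_of_lt hi), hd]
    exact (Classical.choose_spec hex).2
  · rintro ⟨k, d, hk, h⟩
    exact hk ▸ openPath_of_pathFrom h

lemma openPath_level {ω : Config} {a b : Site} (h : OpenPath ω a b) :
    ∃ k : ℕ, b.2 = a.2 + k ∧ (b.1 ≤ a.1 + k ∧ a.1 - k ≤ b.1) := by
  rw [openPath_iff_pathFrom] at h
  obtain ⟨k, d, hk, -⟩ := h
  exact ⟨k, by rw [← hk]; exact pathFrom_level a d k,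
    by rw [← hk]; exact pathFrom_fst_le a d k, by rw [← hk]; exact le_pathFrom_fst a d k⟩

lemma openPath_trans {ω : Config} {a b c : Site} (h1 : OpenPath ω a b)
    (h2 : OpenPath ω b c) : OpenPath ω a c := by
  obtain ⟨k1, γ1, h10, h1k, h1s⟩ := h1
  obtain ⟨k2, γ2, h20, h2k, h2s⟩ := h2
  set γ : ℕ → Site := fun i => if i < k1 then γ1 i else γ2 (i - k1) with hγ
  have hγeq1 : ∀ i ≤ k1, γ i = γ1 i := by
    intro i hi
    by_cases h : i < k1
    · simp [hγ, h]
    · have : i = k1 := by omega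
      subst this
      simp only [hγ, if_neg h, Nat.sub_self]
      rw [h20, h1k]
  have hγeq2 : ∀ i, k1 ≤ i → γ i = γ2 (i - k1) := by
    intro i hi
    by_cases h : i < k1
    · exact absurd h (by omega)
    · simp [hγ, h]
  refine ⟨k1 + k2, γ, by rw [hγeq1 0 (by omega)]; exact h10, ?_, ?_⟩
  · rw [hγeq2 (k1+k2) (by omega), show k1 + k2 - k1 = k2 from by omega]; exact h2k
  · intro i hi
    by_cases h : i < k1
    · obtain ⟨dd, hd1, hd2⟩ := h1s i h
      exact ⟨dd, by rw [hγeq1 i (by omega), hγeq1 (i+1) (by omega)]; exact hd1,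
        by rw [hγeq1 i (by omega)]; exact hd2⟩
    · obtain ⟨dd, hd1, hd2⟩ := h2s (i - k1) (by omega)
      refine ⟨dd, ?_, by rw [hγeq2 i (by omega)]; exact hd2⟩
      rw [hγeq2 i (by omega), hγeq2 (i+1) (by omega),
        show i + 1 - k1 = (i - k1) + 1 from by omega]
      exact hd1

lemma openPath_single {ω : Config} {s : Site} {d : Bool} (h : ω (s, d) = true) :
    OpenPath ω s (bondStep s d) := by
  have : bondStep s d = pathFrom s (fun _ => d) 1 := rfl
  rw [this]
  exact openPath_of_pathFrom (fun i hi => by interval_cases i; exact h)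



lemma pathFrom_add (a : Site) (d : ℕ → Bool) (j t : ℕ) :
    pathFrom a d (j + t) = pathFrom (pathFrom a d j) (fun s => d (j + s)) t := by
  induction t with
  | zero => rfl
  | succ t ih =>
    rw [show j + (t + 1) = (j + t) + 1 from rfl]
    simp only [pathFrom, ih]

lemma level_eq {ω : Config} {x y : ℤ} {n : ℕ} (h : OpenPath ω (x, 0) (y, (n:ℤ))) :
    x - n ≤ y ∧ y ≤ x + n := by
  obtain ⟨k, hk, hb1, hb2⟩ := openPath_level h
  simp only at hk hb1 hb2
  have : k = n := by omega
  subst this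
  exact ⟨hb2, hb1⟩

lemma xi_mono {ω : Config} {A B : Set ℤ} {n : ℕ} (h : A ⊆ B) : xi ω A n ⊆ xi ω B n :=
  fun _ ⟨x, hx, hp⟩ => ⟨x, h hx, hp⟩

lemma xi_subset_Iic {ω : Config} {A : Set ℤ} {n : ℕ} (hA : ∀ x ∈ A, x ≤ 0) :
    xi ω A n ⊆ Set.Iic (n : ℤ) := by
  rintro y ⟨x, hx, hp⟩
  have := (level_eq hp).2
  have := hA x hx
  simp only [Set.mem_Iic]
  omega

lemma mem_zeta_iff {ω : Config} {A : Set ℤ} {n : ℕ} {z : ℤ} :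
    z ∈ zeta ω A n ↔ z + sSup (xi ω A n) ∈ xi ω A n := by
  constructor
  · rintro ⟨w, hw, hwz⟩
    simpa [← hwz] using hw
  · intro h
    exact ⟨z + sSup (xi ω A n), h, by ring⟩

/-- The cluster of the origin, up to level `n`. -/
def cluSet (ω : Config) (n : ℕ) : Set Site := {s | OpenPath ω ((0:ℤ), (0:ℤ)) s ∧ s.2 ≤ (n:ℤ)}

/-- The key deterministic lemma: if the two shifted configurations give different values
of `f`, then some point `-2i` with `1 ≤ i ≤ n+r` reaches level `n` by an open path
avoiding the cluster of the origin. -/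
lemma det {ω : Config} {A' : Set ℤ} (hA0 : (0:ℤ) ∈ A') (hAsub : ∀ z ∈ A', Even z ∧ z ≤ 0)
    {n r : ℕ} {f : Set ℤ → ℝ}
    (hcyl : ∀ B B' : Set ℤ,
      (∀ z : ℤ, -2 * (r : ℤ) ≤ z → z ≤ -2 → (z ∈ B ↔ z ∈ B')) → f B = f B')
    (hC : ∃ y : ℤ, OpenPath ω ((0:ℤ), (0:ℤ)) (y, (n : ℤ)))
    (hne : f (zeta ω A' n) ≠ f (zeta ω {0} n)) :
    ∃ i ∈ Finset.Icc 1 (n + r), ∃ d : ℕ → Bool,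
      ∀ j < n, ω (pathFrom (-2 * (i:ℤ), 0) d j, d j) = true ∧
        pathFrom (-2 * (i:ℤ), 0) d j ∉ cluSet ω n := by
  classical
  set S0 := xi ω {0} n with hS0
  set S1 := xi ω A' n with hS1
  have hsub : S0 ⊆ S1 := xi_mono (by simpa using hA0)
  obtain ⟨y0, hy0C⟩ := hC
  have hS0ne : S0.Nonempty := ⟨y0, 0, rfl, hy0C⟩
  have hS1ne : S1.Nonempty := hS0ne.mono hsub
  have hS1bdd : BddAbove S1 := ⟨n, fun y hy => xi_subset_Iic (fun x hx => (hAsub x hx).2) hy⟩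
  have hS0bdd : BddAbove S0 := hS1bdd.mono hsub
  set R0 := sSup S0 with hR0
  set R1 := sSup S1 with hR1
  have hR01 : R0 ≤ R1 := csSup_le_csSup hS1bdd hS0ne hsub
  have hR0mem : R0 ∈ S0 := Int.csSup_mem hS0ne hS0bdd
  have hR1mem : R1 ∈ S1 := Int.csSup_mem hS1ne hS1bdd
  have hR0lb : -(n:ℤ) ≤ R0 := by
    obtain ⟨x, hx, hp⟩ := hR0mem
    simp only [Set.mem_singleton_iff] at hx
    subst hx
    have := (level_eq hp).1
    omega
  -- obtain a point y in S1 \ S0 with R0 - 2r ≤ y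
  obtain ⟨y, hy1, hy0, hylb⟩ : ∃ y, y ∈ S1 ∧ y ∉ S0 ∧ R0 - 2 * r ≤ y := by
    by_cases hR : R0 < R1
    · refine ⟨R1, hR1mem, fun h => absurd (le_csSup hS0bdd h) (by omega), ?_⟩
      have : (0:ℤ) ≤ 2 * r := by positivity
      omega
    · have hRR : R1 = R0 := le_antisymm (by omega) hR01
      obtain ⟨z, hz1, hz2, hz⟩ : ∃ z : ℤ, -2 * (r:ℤ) ≤ z ∧ z ≤ -2 ∧
          ¬(z ∈ zeta ω A' n ↔ z ∈ zeta ω {0} n) := by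
        by_contra hcon
        push_neg at hcon
        exact hne (hcyl _ _ (fun z h1 h2 => hcon z h1 h2))
      rw [mem_zeta_iff, mem_zeta_iff] at hz
      rw [← hS0, ← hS1, ← hR0, ← hR1, hRR] at hz
      rcases Classical.em (z + R0 ∈ S1) with h1 | h1
      · have h0 : z + R0 ∉ S0 := fun h => hz ⟨fun _ => h, fun _ => h1⟩
        exact ⟨z + R0, h1, h0, by omega⟩
      · have h0 : z + R0 ∈ S0 := by
          by_contra h0
          exact hz ⟨fun h => absurd h h1, fun h => absurd h h0⟩
        exact absurd (hsub h0) h1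
  obtain ⟨x, hxA, hpath⟩ := hy1
  have hx0 : x ≠ 0 := by
    rintro rfl
    exact hy0 ⟨0, rfl, hpath⟩
  obtain ⟨m, hm⟩ := (hAsub x hxA).1
  have hxle : x ≤ 0 := (hAsub x hxA).2
  have hyub : y ≤ x + n := (level_eq hpath).2
  set i : ℕ := (-m).toNat with hi
  have hiZ : (i:ℤ) = -m := Int.toNat_of_nonneg (by omega)
  have hxi : x = -2 * (i:ℤ) := by omega
  have hmem : i ∈ Finset.Icc 1 (n + r) := by
    rw [Finset.mem_Icc]
    constructor
    · have : m ≠ 0 := by omega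
      omega
    · have hx2 : -2 * ((n:ℤ) + r) ≤ x := by omega
      have : ((n:ℤ) + r) ≥ (i:ℤ) := by omega
      exact_mod_cast this
  refine ⟨i, hmem, ?_⟩
  rw [openPath_iff_pathFrom] at hpath
  obtain ⟨k, d, hdk, hdopen⟩ := hpath
  have hkn : k = n := by
    have := pathFrom_level (x, 0) d k
    rw [hdk] at this
    simp only at this
    omega
  subst hkn
  rw [← hxi]
  refine ⟨d, fun j hj => ⟨hdopen j hj, ?_⟩⟩
  rintro ⟨hcl, -⟩
  apply hy0
  refine ⟨0, rfl, openPath_trans hcl ?_⟩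
  rw [← hdk, show k = j + (k - j) from by omega, pathFrom_add]
  exact openPath_of_pathFrom (fun t ht => by
    rw [← pathFrom_add]
    exact hdopen (j + t) (by omega))


/-! ### Measurability infrastructure -/

/-- The sub-σ-algebra generated by the bonds in `S`. -/
def F (S : Set Bond) : MeasurableSpace Config :=
  ⨆ b ∈ S, MeasurableSpace.comap (fun ω : Config => ω b) inferInstance

lemma F_le (S : Set Bond) : F S ≤ (inferInstance : MeasurableSpace Config) :=
  iSup₂_le fun b _ => (measurable_pi_apply b).comap_le

lemma measurableSet_coord {S : Set Bond} {b : Bond} (hb : b ∈ S) (v : Bool) :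
    MeasurableSet[F S] {ω : Config | ω b = v} := by
  have h1 : MeasurableSet[MeasurableSpace.comap (fun ω : Config => ω b) inferInstance]
      {ω : Config | ω b = v} := ⟨{v}, trivial, rfl⟩
  have h2 : MeasurableSpace.comap (fun ω : Config => ω b) inferInstance ≤ F S :=
    le_iSup₂ (f := fun (b : Bond) (_ : b ∈ S) =>
      MeasurableSpace.comap (fun ω : Config => ω b) inferInstance) b hb
  exact h2 _ h1

lemma measurableSet_setOf_const (m : MeasurableSpace Config) (q : Prop) :
    MeasurableSet[m] {_ω : Config | q} := by
  by_cases h : q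
  · simp only [h, Set.setOf_true]
    exact MeasurableSet.univ
  · simp only [h, Set.setOf_false]
    exact MeasurableSet.empty

/-- Extend a finite direction sequence by `true`s. -/
def ext (k : ℕ) (d : Fin k → Bool) : ℕ → Bool := fun i => if h : i < k then d ⟨i, h⟩ else true

/-- The master path-event: there is a direction sequence whose path from `a` is open for
`k` steps, avoids `K` (at the first `k` sites), and whose endpoint satisfies `Q`. -/
def Ev (K : Set Site) (a : Site) (k : ℕ) (Q : Site → Prop) : Set Config :=
  {ω | ∃ d : ℕ → Bool, (∀ i < k, ω (pathFrom a d i, d i) = true ∧ pathFrom a d i ∉ K) ∧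
    Q (pathFrom a d k)}

lemma Ev_eq (K : Set Site) (a : Site) (k : ℕ) (Q : Site → Prop) :
    Ev K a k Q = ⋃ d : Fin k → Bool,
      ({ω : Config | ∀ i < k, ω (pathFrom a (ext k d) i, ext k d i) = true ∧
          pathFrom a (ext k d) i ∉ K} ∩ {_ω : Config | Q (pathFrom a (ext k d) k)}) := by
  ext ω
  simp only [Ev, Set.mem_setOf_eq, Set.mem_iUnion, Set.mem_inter_iff]
  constructor
  · rintro ⟨d, h1, h2⟩
    refine ⟨fun i => d i, ?_, ?_⟩
    · intro i hi
      have hcong : pathFrom a (ext k (fun j => d j)) i = pathFrom a d i :=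
        pathFrom_congr a i (fun j hj => by simp [ext, show j < k from by omega])
      rw [hcong, show ext k (fun j => d j) i = d i from by simp [ext, hi]]
      exact h1 i hi
    · have hcong : pathFrom a (ext k (fun j => d j)) k = pathFrom a d k :=
        pathFrom_congr a k (fun j hj => by simp [ext, hj])
      rw [hcong]; exact h2
  · rintro ⟨d, h1, h2⟩
    exact ⟨ext k d, h1, h2⟩

lemma measurableSet_Ev {S : Set Bond} {K : Set Site} (a : Site) (k : ℕ) (Q : Site → Prop)
    (hS : ∀ s : Site, s ∉ K → ∀ v : Bool, (s, v) ∈ S) :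
    MeasurableSet[F S] (Ev K a k Q) := by
  rw [Ev_eq]
  refine MeasurableSet.iUnion (fun d => ?_)
  refine MeasurableSet.inter ?_ (measurableSet_setOf_const _ _)
  by_cases hc : ∀ i < k, pathFrom a (ext k d) i ∉ K
  · have heq : {ω : Config | ∀ i < k, ω (pathFrom a (ext k d) i, ext k d i) = true ∧
        pathFrom a (ext k d) i ∉ K} =
        ⋂ i : Fin k, {ω : Config | ω (pathFrom a (ext k d) (i:ℕ), ext k d (i:ℕ)) = true} := by
      ext ω
      simp only [Set.mem_setOf_eq, Set.mem_iInter]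
      exact ⟨fun h i => (h i i.isLt).1, fun h i hi => ⟨h ⟨i, hi⟩, hc i hi⟩⟩
    rw [heq]
    refine MeasurableSet.iInter (fun i => ?_)
    exact measurableSet_coord (hS _ (hc i i.isLt) _) true
  · have heq : {ω : Config | ∀ i < k, ω (pathFrom a (ext k d) i, ext k d i) = true ∧
        pathFrom a (ext k d) i ∉ K} = ∅ := by
      push_neg at hc
      obtain ⟨i, hi, hiK⟩ := hc
      ext ω
      simp only [Set.mem_setOf_eq, Set.mem_empty_iff_false, iff_false, not_forall]
      exact ⟨i, hi, fun h => (h.2 hiK).elim⟩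
    rw [heq]
    exact @MeasurableSet.empty _ (F S)

/-- The single-target open-path event as a master event. -/
lemma openPathEvent_eq (x y : ℤ) (n : ℕ) :
    {ω : Config | OpenPath ω (x, 0) (y, (n : ℤ))} =
      Ev ∅ (x, 0) n (fun s => s = (y, (n : ℤ))) := by
  ext ω
  simp only [Set.mem_setOf_eq, Ev, Set.mem_empty_iff_false, not_false_eq_true, and_true]
  constructor
  · intro h
    rw [openPath_iff_pathFrom] at h
    obtain ⟨k, d, hk, hopen⟩ := h
    have hlev := pathFrom_level (x, 0) d k
    rw [hk] at hlev
    simp only at hlev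
    have : k = n := by omega
    subst this
    exact ⟨d, hopen, hk⟩
  · rintro ⟨d, hopen, hend⟩
    rw [← hend]
    exact openPath_of_pathFrom hopen

lemma reachEvent_eq (x : ℤ) (n : ℕ) :
    {ω : Config | ∃ y : ℤ, OpenPath ω (x, 0) (y, (n : ℤ))} =
      Ev ∅ (x, 0) n (fun _ => True) := by
  ext ω
  simp only [Set.mem_setOf_eq, Ev, Set.mem_empty_iff_false, not_false_eq_true, and_true]
  constructor
  · rintro ⟨y, h⟩
    rw [openPath_iff_pathFrom] at h
    obtain ⟨k, d, hk, hopen⟩ := h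
    have hlev := pathFrom_level (x, 0) d k
    rw [hk] at hlev
    simp only at hlev
    have : k = n := by omega
    subst this
    exact ⟨d, hopen⟩
  · rintro ⟨d, hopen⟩
    refine ⟨(pathFrom (x, 0) d n).1, ?_⟩
    have hlev := pathFrom_level (x, 0) d n
    have h2 : (pathFrom (x, 0) d n).2 = (n : ℤ) := by simp only at hlev; omega
    have hop := openPath_of_pathFrom hopen
    rwa [show pathFrom (x, 0) d n = ((pathFrom (x, 0) d n).1, (n:ℤ)) from by
      rw [← h2]] at hop

lemma measurableSet_openPathEvent (x y : ℤ) (n : ℕ) :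
    MeasurableSet {ω : Config | OpenPath ω (x, 0) (y, (n : ℤ))} := by
  rw [openPathEvent_eq]
  exact F_le _ _ (measurableSet_Ev _ _ _ (fun s _ v => Set.mem_univ _))

lemma measurableSet_reachEvent (x : ℤ) (n : ℕ) :
    MeasurableSet {ω : Config | ∃ y : ℤ, OpenPath ω (x, 0) (y, (n : ℤ))} := by
  rw [reachEvent_eq]
  exact F_le _ _ (measurableSet_Ev _ _ _ (fun s _ v => Set.mem_univ _))


lemma mem_cluSet_zero (ω : Config) (n : ℕ) : ((0:ℤ),(0:ℤ)) ∈ cluSet ω n := by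
  refine ⟨⟨0, fun _ => ((0:ℤ),(0:ℤ)), rfl, rfl, fun i hi => absurd hi (by omega)⟩, ?_⟩
  simp

lemma cluSet_mem_level {ω : Config} {n : ℕ} {s : Site} (hs : s ∈ cluSet ω n) :
    0 ≤ s.2 ∧ s.2 ≤ (n:ℤ) ∧ -(n:ℤ) ≤ s.1 ∧ s.1 ≤ (n:ℤ) := by
  obtain ⟨hp, hl⟩ := hs
  obtain ⟨k, hk, hb1, hb2⟩ := openPath_level hp
  simp only at hk hb1 hb2
  omega

/-- Measurability of the event `cluSet ω n = K` with respect to the bonds whose bottom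
site lies in `K`. -/
lemma measurableSet_cluEv (n : ℕ) (K : Finset Site) :
    MeasurableSet[F {b : Bond | b.1 ∈ (K : Set Site)}] {ω : Config | cluSet ω n = ↑K} := by
  classical
  by_cases h0 : ((0:ℤ),(0:ℤ)) ∈ K ∧ ∀ s ∈ K, 0 ≤ s.2 ∧ s.2 ≤ (n:ℤ)
  · have heq : {ω : Config | cluSet ω n = ↑K} =
        (⋂ (s : Site) (_ : s ∈ K) (v : Bool),
          {ω : Config | s.2 < (n:ℤ) → ω (s, v) = true → bondStep s v ∈ K}) ∩
        (⋂ (s : Site) (_ : s ∈ K),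
          Ev (↑K : Set Site)ᶜ ((0:ℤ),(0:ℤ)) s.2.toNat (fun t => t = s)) := by
      ext ω
      simp only [Set.mem_setOf_eq, Set.mem_inter_iff, Set.mem_iInter]
      constructor
      · intro hω
        constructor
        · intro s hs v hlt hopen
          have hsclu : s ∈ cluSet ω n := by rw [hω]; exact_mod_cast hs
          have : bondStep s v ∈ cluSet ω n := by
            refine ⟨openPath_trans hsclu.1 (openPath_single hopen), ?_⟩
            simp only [bondStep]
            omega
          rw [hω] at this
          exact_mod_cast this
        · intro s hs
          have hsclu : s ∈ cluSet ω n := by rw [hω]; exact_mod_cast hs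
          obtain ⟨hp, hl⟩ := hsclu
          rw [openPath_iff_pathFrom] at hp
          obtain ⟨k, d, hdk, hdopen⟩ := hp
          have hk : s.2 = (k:ℤ) := by
            have := pathFrom_level ((0:ℤ),(0:ℤ)) d k
            rw [hdk] at this
            simpa using this
          have htoNat : s.2.toNat = k := by omega
          refine ⟨d, fun i hi => ⟨hdopen i (by omega), ?_⟩, by rw [htoNat]; exact hdk⟩
          simp only [Set.mem_compl_iff, not_not, Finset.mem_coe]
          have : pathFrom ((0:ℤ),(0:ℤ)) d i ∈ cluSet ω n := by
            refine ⟨openPath_of_pathFrom (fun j hj => hdopen j (by omega)), ?_⟩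
            have := pathFrom_level ((0:ℤ),(0:ℤ)) d i
            simp only at this
            omega
          rw [hω] at this
          exact_mod_cast this
      · rintro ⟨h1, h2⟩
        apply Set.Subset.antisymm
        · intro s hs
          obtain ⟨hp, hl⟩ := hs
          rw [openPath_iff_pathFrom] at hp
          obtain ⟨k, d, hdk, hdopen⟩ := hp
          have hk : s.2 = (k:ℤ) := by
            have := pathFrom_level ((0:ℤ),(0:ℤ)) d k
            rw [hdk] at this
            simpa using this
          have key : ∀ j ≤ k, pathFrom ((0:ℤ),(0:ℤ)) d j ∈ K := by
            intro j hj
            induction j with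
            | zero => simpa using h0.1
            | succ j ih =>
              have hjK := ih (by omega)
              have hlev : (pathFrom ((0:ℤ),(0:ℤ)) d j).2 = (j:ℤ) := by
                have := pathFrom_level ((0:ℤ),(0:ℤ)) d j
                simpa using this
              have := h1 _ hjK (d j) (by omega) (hdopen j (by omega))
              simpa [pathFrom] using this
          rw [← hdk]
          exact_mod_cast key k le_rfl
        · intro s hs
          have hs' : s ∈ K := by exact_mod_cast hs
          obtain ⟨d, hcond, hend⟩ := h2 s hs'
          refine ⟨?_, (h0.2 s hs').2⟩
          rw [← hend]
          exact openPath_of_pathFrom (fun i hi => (hcond i hi).1)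
    rw [heq]
    apply MeasurableSet.inter
    · refine MeasurableSet.iInter fun s => MeasurableSet.iInter fun hs =>
        MeasurableSet.iInter fun v => ?_
      by_cases h1 : s.2 < (n:ℤ) ∧ bondStep s v ∉ K
      · have : {ω : Config | s.2 < (n:ℤ) → ω (s, v) = true → bondStep s v ∈ K}
            = {ω : Config | ω (s, v) = true}ᶜ := by
          ext ω
          simp only [Set.mem_setOf_eq, Set.mem_compl_iff]
          constructor
          · intro h hop
            exact h1.2 (h h1.1 hop)
          · intro h hlt hop
            exact absurd hop h
        rw [this]
        exact (measurableSet_coord (by simpa using hs) true).compl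
      · have : {ω : Config | s.2 < (n:ℤ) → ω (s, v) = true → bondStep s v ∈ K}
            = Set.univ := by
          ext ω
          simp only [Set.mem_setOf_eq, Set.mem_univ, iff_true]
          intro hlt hop
          by_contra hK
          exact h1 ⟨hlt, hK⟩
        rw [this]
        exact @MeasurableSet.univ _ (F _)
    · refine MeasurableSet.iInter fun s => MeasurableSet.iInter fun hs => ?_
      refine measurableSet_Ev _ _ _ (fun t ht v => ?_)
      simp only [Set.mem_compl_iff, not_not] at ht
      simpa using ht
  · have heq : {ω : Config | cluSet ω n = ↑K} = ∅ := by
      rw [Set.eq_empty_iff_forall_notMem]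
      intro ω hω
      simp only [Set.mem_setOf_eq] at hω
      apply h0
      constructor
      · have := mem_cluSet_zero ω n
        rw [hω] at this
        exact_mod_cast this
      · intro s hs
        have hs' : s ∈ cluSet ω n := by rw [hω]; exact_mod_cast hs
        have := cluSet_mem_level hs'
        exact ⟨this.1, this.2.1⟩
    rw [heq]
    exact @MeasurableSet.empty _ (F _)


/-! ### Measurability of `xi`, `zeta` and functions thereof -/

lemma measurableSet_mem_xi (A : Set ℤ) (n : ℕ) (y : ℤ) :
    MeasurableSet {ω : Config | y ∈ xi ω A n} := by
  have heq : {ω : Config | y ∈ xi ω A n} =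
      ⋃ x : A, {ω : Config | OpenPath ω ((x:ℤ), 0) (y, (n:ℤ))} := by
    ext ω
    simp only [Set.mem_setOf_eq, Set.mem_iUnion, xi]
    constructor
    · rintro ⟨x, hx, hp⟩
      exact ⟨⟨x, hx⟩, hp⟩
    · rintro ⟨⟨x, hx⟩, hp⟩
      exact ⟨x, hx, hp⟩
  rw [heq]
  have : Countable A := (Set.to_countable A).to_subtype
  exact MeasurableSet.iUnion fun x => measurableSet_openPathEvent _ _ _

lemma measurableSet_xi_empty (A : Set ℤ) (n : ℕ) :
    MeasurableSet {ω : Config | xi ω A n = ∅} := by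
  have heq : {ω : Config | xi ω A n = ∅} = ⋂ y : ℤ, {ω : Config | y ∈ xi ω A n}ᶜ := by
    ext ω
    simp [Set.eq_empty_iff_forall_notMem]
  rw [heq]
  exact MeasurableSet.iInter fun y => (measurableSet_mem_xi A n y).compl

lemma measurableSet_sSup_xi (A : Set ℤ) (n : ℕ) (hA : ∀ x ∈ A, x ≤ 0) (t : ℤ) :
    MeasurableSet {ω : Config | sSup (xi ω A n) = t} := by
  have heq : {ω : Config | sSup (xi ω A n) = t} =
      ({ω : Config | xi ω A n = ∅} ∩ {_ω : Config | sSup (∅ : Set ℤ) = t}) ∪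
      ({ω : Config | xi ω A n = ∅}ᶜ ∩ {ω : Config | t ∈ xi ω A n} ∩
        ⋂ y : ℤ, {ω : Config | y ∈ xi ω A n → y ≤ t}) := by
    ext ω
    simp only [Set.mem_setOf_eq, Set.mem_union, Set.mem_inter_iff, Set.mem_compl_iff,
      Set.mem_iInter]
    by_cases hne : xi ω A n = ∅
    · simp [hne]
    · have hnonempty : (xi ω A n).Nonempty := Set.nonempty_iff_ne_empty.mpr hne
      have hbdd : BddAbove (xi ω A n) := ⟨n, fun y hy => xi_subset_Iic hA hy⟩
      simp only [hne, false_and, false_or, not_false_eq_true, true_and]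
      constructor
      · intro h
        refine ⟨h ▸ Int.csSup_mem hnonempty hbdd, fun y hy => h ▸ le_csSup hbdd hy⟩
      · rintro ⟨hmem, hub⟩
        exact le_antisymm (csSup_le hnonempty hub) (le_csSup hbdd hmem)
  rw [heq]
  refine MeasurableSet.union
    ((measurableSet_xi_empty A n).inter (measurableSet_setOf_const _ _)) ?_
  refine (((measurableSet_xi_empty A n).compl).inter (measurableSet_mem_xi A n t)).inter ?_
  refine MeasurableSet.iInter fun y => ?_
  by_cases hy : y ≤ t
  · have : {ω : Config | y ∈ xi ω A n → y ≤ t} = Set.univ := by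
      ext ω; simp [hy]
    rw [this]; exact MeasurableSet.univ
  · have : {ω : Config | y ∈ xi ω A n → y ≤ t} = {ω : Config | y ∈ xi ω A n}ᶜ := by
      ext ω; simp [hy]
    rw [this]; exact (measurableSet_mem_xi A n y).compl

lemma measurableSet_mem_zeta (A : Set ℤ) (n : ℕ) (hA : ∀ x ∈ A, x ≤ 0) (z : ℤ) :
    MeasurableSet {ω : Config | z ∈ zeta ω A n} := by
  have heq : {ω : Config | z ∈ zeta ω A n} =
      ⋃ t : ℤ, ({ω : Config | sSup (xi ω A n) = t} ∩ {ω : Config | z + t ∈ xi ω A n}) := by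
    ext ω
    simp only [Set.mem_setOf_eq, Set.mem_iUnion, Set.mem_inter_iff, mem_zeta_iff]
    constructor
    · intro h
      exact ⟨sSup (xi ω A n), rfl, h⟩
    · rintro ⟨t, ht, hmem⟩
      rw [ht]
      exact hmem
  rw [heq]
  exact MeasurableSet.iUnion fun t =>
    (measurableSet_sSup_xi A n hA t).inter (measurableSet_mem_xi A n _)

lemma f_eq_trace {ω : Config} {A : Set ℤ} {n r : ℕ} {f : Set ℤ → ℝ}
    (hcyl : ∀ B B' : Set ℤ,
      (∀ z : ℤ, -2 * (r : ℤ) ≤ z → z ≤ -2 → (z ∈ B ↔ z ∈ B')) → f B = f B')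
    {F : Finset ℤ} (h : zeta ω A n ∩ Set.Icc (-2 * (r:ℤ)) (-2) = ↑F) :
    f (zeta ω A n) = f ↑F := by
  refine hcyl _ _ (fun z h1 h2 => ?_)
  rw [← h]
  simp only [Set.mem_inter_iff, Set.mem_Icc]
  exact ⟨fun hz => ⟨hz, h1, h2⟩, fun hz => hz.1⟩

lemma measurable_f_zeta (A : Set ℤ) (n : ℕ) (hA : ∀ x ∈ A, x ≤ 0) {r : ℕ} {f : Set ℤ → ℝ}
    (hcyl : ∀ B B' : Set ℤ,
      (∀ z : ℤ, -2 * (r : ℤ) ≤ z → z ≤ -2 → (z ∈ B ↔ z ∈ B')) → f B = f B') :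
    Measurable (fun ω => f (zeta ω A n)) := by
  intro t _
  have heq : (fun ω => f (zeta ω A n)) ⁻¹' t =
      ⋃ (F : Finset ℤ) (_ : f ↑F ∈ t),
        {ω : Config | zeta ω A n ∩ Set.Icc (-2 * (r:ℤ)) (-2) = ↑F} := by
    ext ω
    simp only [Set.mem_preimage, Set.mem_iUnion, Set.mem_setOf_eq]
    constructor
    · intro h
      have hfin : (zeta ω A n ∩ Set.Icc (-2 * (r:ℤ)) (-2)).Finite :=
        (Set.finite_Icc _ _).inter_of_right _
      refine ⟨hfin.toFinset, ?_, ?_⟩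
      · rw [← f_eq_trace hcyl hfin.coe_toFinset.symm]
        exact h
      · exact hfin.coe_toFinset.symm
    · rintro ⟨F, hFt, hF⟩
      rw [f_eq_trace hcyl hF]
      exact hFt
  rw [heq]
  refine MeasurableSet.iUnion fun F => MeasurableSet.iUnion fun _ => ?_
  by_cases hF : (↑F : Set ℤ) ⊆ Set.Icc (-2 * (r:ℤ)) (-2)
  · have heq2 : {ω : Config | zeta ω A n ∩ Set.Icc (-2 * (r:ℤ)) (-2) = ↑F} =
        ⋂ (z : ℤ) (_ : z ∈ Set.Icc (-2 * (r:ℤ)) (-2)),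
          {ω : Config | z ∈ zeta ω A n ↔ z ∈ F} := by
      ext ω
      simp only [Set.mem_setOf_eq, Set.mem_iInter]
      constructor
      · intro h z hz
        constructor
        · intro hzz
          have : z ∈ zeta ω A n ∩ Set.Icc (-2 * (r:ℤ)) (-2) := ⟨hzz, hz⟩
          rw [h] at this
          exact_mod_cast this
        · intro hzF
          have : z ∈ (↑F : Set ℤ) := by exact_mod_cast hzF
          rw [← h] at this
          exact this.1
      · intro h
        ext w
        simp only [Set.mem_inter_iff, Finset.mem_coe]
        constructor
        · rintro ⟨hw1, hw2⟩
          exact (h w hw2).mp hw1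
        · intro hw
          have hw2 : w ∈ Set.Icc (-2 * (r:ℤ)) (-2) := hF (by exact_mod_cast hw)
          exact ⟨(h w hw2).mpr hw, hw2⟩
    rw [heq2]
    refine MeasurableSet.iInter fun z => MeasurableSet.iInter fun hz => ?_
    by_cases hzF : z ∈ F
    · have : {ω : Config | z ∈ zeta ω A n ↔ z ∈ F} = {ω : Config | z ∈ zeta ω A n} := by
        ext ω; simp [hzF]
      rw [this]; exact measurableSet_mem_zeta A n hA z
    · have : {ω : Config | z ∈ zeta ω A n ↔ z ∈ F} = {ω : Config | z ∈ zeta ω A n}ᶜ := by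
        ext ω; simp [hzF]
      rw [this]; exact (measurableSet_mem_zeta A n hA z).compl
  · have : {ω : Config | zeta ω A n ∩ Set.Icc (-2 * (r:ℤ)) (-2) = ↑F} = ∅ := by
      rw [Set.eq_empty_iff_forall_notMem]
      intro ω h
      simp only [Set.mem_setOf_eq] at h
      exact hF (by rw [← h]; exact fun w hw => hw.2)
    rw [this]; exact MeasurableSet.empty


/-! ### The probability estimate -/

noncomputable def box (n : ℕ) : Finset Site := Finset.Icc (-(n:ℤ)) (n:ℤ) ×ˢ Finset.Icc (0:ℤ) (n:ℤ)

lemma cluSet_finset (ω : Config) (n : ℕ) : ∃ K ∈ (box n).powerset, cluSet ω n = ↑K := by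
  have hsub : cluSet ω n ⊆ ↑(box n) := by
    intro s hs
    have h := cluSet_mem_level hs
    simp only [box, Finset.coe_product, Set.mem_prod, Finset.mem_coe, Finset.mem_Icc]
    exact ⟨⟨h.2.2.1, h.2.2.2⟩, ⟨h.1, h.2.1⟩⟩
  have hfin : (cluSet ω n).Finite := Set.Finite.subset ((box n).finite_toSet) hsub
  refine ⟨hfin.toFinset, ?_, hfin.coe_toFinset.symm⟩
  rw [Finset.mem_powerset]
  intro s hs
  exact hsub (by rwa [← hfin.mem_toFinset])

lemma indep_of_FST (P : Measure Config) {p : ℝ} (hiid : IIDBernoulli P p) {S T : Set Bond}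
    (hST : Disjoint S T) {E1 E2 : Set Config}
    (h1 : MeasurableSet[F S] E1) (h2 : MeasurableSet[F T] E2) :
    P (E1 ∩ E2) = P E1 * P E2 := by
  have hle : ∀ b : Bond, MeasurableSpace.comap (fun ω : Config => ω b) inferInstance ≤
      (inferInstance : MeasurableSpace Config) :=
    fun b => (measurable_pi_apply b).comap_le
  have hind : Indep (F S) (F T) P :=
    indep_iSup_of_disjoint hle hiid.2 hST
  exact (hind.indepSet_of_measurableSet h1 h2).measure_inter_eq_mul


lemma key_bound (P : Measure Config) [IsProbabilityMeasure P] {p : ℝ} (hiid : IIDBernoulli P p)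
    {β : ℝ} (n r : ℕ)
    (hdecay : ∀ x : ℤ, P {ω : Config | ∃ y : ℤ, OpenPath ω (x, 0) (y, (n : ℤ))}
      ≤ ENNReal.ofReal (Real.exp (-β * n)))
    {A' : Set ℤ} (hA0 : (0:ℤ) ∈ A') (hAsub : ∀ z ∈ A', Even z ∧ z ≤ 0)
    {f : Set ℤ → ℝ}
    (hcyl : ∀ B B' : Set ℤ,
      (∀ z : ℤ, -2 * (r : ℤ) ≤ z → z ≤ -2 → (z ∈ B ↔ z ∈ B')) → f B = f B') :
    P ({ω : Config | f (zeta ω A' n) ≠ f (zeta ω {0} n)} ∩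
        {ω : Config | ∃ y : ℤ, OpenPath ω ((0:ℤ), (0:ℤ)) (y, (n : ℤ))})
      ≤ (n + r : ℕ) * ENNReal.ofReal (Real.exp (-β * n)) *
        P {ω : Config | ∃ y : ℤ, OpenPath ω ((0:ℤ), (0:ℤ)) (y, (n : ℤ))} := by
  classical
  set c : ENNReal := ENNReal.ofReal (Real.exp (-β * n)) with hc
  set C : Set Config := {ω : Config | ∃ y : ℤ, OpenPath ω ((0:ℤ), (0:ℤ)) (y, (n : ℤ))} with hCdef
  set D : Set Config := {ω : Config | f (zeta ω A' n) ≠ f (zeta ω {0} n)} with hDdef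
  set AK : Finset Site → Set Config := fun K => {ω : Config | cluSet ω n = ↑K} with hAK
  -- the partition lemma
  have hAKdisj : Set.PairwiseDisjoint ↑(box n).powerset (fun K => AK K) := by
    intro K _ K' _ hne
    refine Set.disjoint_left.mpr ?_
    intro ω h1 h2
    simp only [hAK, Set.mem_setOf_eq] at h1 h2
    exact hne (Finset.coe_injective (h1 ▸ h2))
  have hAKmeas : ∀ K : Finset Site, MeasurableSet (AK K) :=
    fun K => F_le _ _ (measurableSet_cluEv n K)
  have hparts : ∀ X : Set Config, MeasurableSet X →
      P X = ∑ K ∈ (box n).powerset, P (X ∩ AK K) := by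
    intro X hX
    have hcover : X = ⋃ K ∈ (box n).powerset, (X ∩ AK K) := by
      ext ω
      simp only [Set.mem_iUnion, Set.mem_inter_iff]
      constructor
      · intro hω
        obtain ⟨K, hK1, hK2⟩ := cluSet_finset ω n
        exact ⟨K, hK1, hω, hK2⟩
      · rintro ⟨K, _, hω, -⟩
        exact hω
    conv_lhs => rw [hcover]
    refine measure_biUnion_finset ?_ (fun K _ => hX.inter (hAKmeas K))
    intro K hK K' hK' hne
    exact (hAKdisj hK hK' hne).mono (Set.inter_subset_right) (Set.inter_subset_right)
  -- the per-cluster bound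
  have hperK : ∀ K ∈ (box n).powerset, P ((D ∩ C) ∩ AK K) ≤ (n + r : ℕ) * c * P (C ∩ AK K) := by
    intro K _
    by_cases hK : ∃ s ∈ K, s.2 = (n : ℤ)
    · -- in this case AK K ⊆ C
      have hsubC : AK K ⊆ C := by
        intro ω hω
        simp only [hAK, Set.mem_setOf_eq] at hω
        obtain ⟨s, hsK, hs2⟩ := hK
        have hsclu : s ∈ cluSet ω n := by rw [hω]; exact_mod_cast hsK
        refine ⟨s.1, ?_⟩
        have : s = (s.1, (n:ℤ)) := by rw [← hs2]
        rw [← this]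
        exact hsclu.1
      have hCA : C ∩ AK K = AK K := Set.inter_eq_self_of_subset_right hsubC
      -- deterministic inclusion
      have hincl : (D ∩ C) ∩ AK K ⊆
          ⋃ i ∈ Finset.Icc 1 (n + r), (Ev (↑K : Set Site) ((-2 * (i:ℤ), 0) : Site) n
            (fun _ => True) ∩ AK K) := by
        rintro ω ⟨⟨hD, hC⟩, hA⟩
        simp only [hAK, Set.mem_setOf_eq] at hA
        obtain ⟨i, hi, d, hd⟩ := det hA0 hAsub hcyl hC hD
        refine Set.mem_biUnion hi ⟨⟨d, fun j hj => ⟨(hd j hj).1, ?_⟩, trivial⟩, hA⟩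
        rw [← hA]
        exact (hd j hj).2
      calc P ((D ∩ C) ∩ AK K)
          ≤ ∑ i ∈ Finset.Icc 1 (n + r), P (Ev (↑K : Set Site) ((-2 * (i:ℤ), 0) : Site) n
              (fun _ => True) ∩ AK K) :=
            le_trans (measure_mono hincl) (measure_biUnion_finset_le _ _)
        _ ≤ ∑ _i ∈ Finset.Icc 1 (n + r), c * P (AK K) := by
            refine Finset.sum_le_sum (fun i _ => ?_)
            have hindep : P (Ev (↑K : Set Site) ((-2 * (i:ℤ), 0) : Site) n (fun _ => True)
                ∩ AK K) = P (Ev (↑K : Set Site) ((-2 * (i:ℤ), 0) : Site) n (fun _ => True))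
                * P (AK K) := by
              refine indep_of_FST P hiid (S := {b : Bond | b.1 ∉ (↑K : Set Site)})
                (T := {b : Bond | b.1 ∈ (↑K : Set Site)}) ?_ ?_ ?_
              · exact Set.disjoint_left.mpr (fun b hb hb' => hb hb')
              · exact measurableSet_Ev _ _ _ (fun s hs v => hs)
              · exact measurableSet_cluEv n K
            rw [hindep]
            refine mul_le_mul_left ?_ _
            refine le_trans (measure_mono ?_) (hdecay (-2 * (i:ℤ)))
            intro ω hω
            obtain ⟨d, hcond, -⟩ := hω
            rw [reachEvent_eq]
            exact ⟨d, fun j hj => ⟨(hcond j hj).1, Set.notMem_empty _⟩, trivial⟩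
        _ = (n + r : ℕ) * c * P (AK K) := by
            rw [Finset.sum_const, Nat.card_Icc]
            simp only [Nat.add_sub_cancel, nsmul_eq_mul, mul_assoc]
        _ = (n + r : ℕ) * c * P (C ∩ AK K) := by rw [hCA]
    · -- in this case C ∩ AK K = ∅
      have hempty : (D ∩ C) ∩ AK K = ∅ := by
        rw [Set.eq_empty_iff_forall_notMem]
        rintro ω ⟨⟨-, hC⟩, hA⟩
        simp only [hAK, Set.mem_setOf_eq] at hA
        obtain ⟨y, hy⟩ := hC
        have : ((y, (n:ℤ)) : Site) ∈ cluSet ω n := ⟨hy, le_refl _⟩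
        rw [hA] at this
        exact hK ⟨(y, (n:ℤ)), by exact_mod_cast this, rfl⟩
      rw [hempty]
      simp
  -- put everything together
  have hDC : MeasurableSet (D ∩ C) := by
    refine MeasurableSet.inter ?_ (measurableSet_reachEvent 0 n)
    have h1 := measurable_f_zeta A' n (fun x hx => (hAsub x hx).2) hcyl
    have h0 := measurable_f_zeta {0} n (by simp) hcyl
    exact (measurableSet_eq_fun h1 h0).compl
  calc P (D ∩ C) = ∑ K ∈ (box n).powerset, P ((D ∩ C) ∩ AK K) := hparts _ hDC
    _ ≤ ∑ K ∈ (box n).powerset, (n + r : ℕ) * c * P (C ∩ AK K) :=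
        Finset.sum_le_sum hperK
    _ = (n + r : ℕ) * c * ∑ K ∈ (box n).powerset, P (C ∩ AK K) := by
        rw [Finset.mul_sum]
    _ = (n + r : ℕ) * c * P C := by
        rw [← hparts C (measurableSet_reachEvent 0 n)]

end Perc

/-- Lemma 3.4: assume exponential decay of the single-site survival
probability, `P(ξ^x_n ≠ ∅) ≤ exp (-β n)`.  If `f` is a cylinder function depending only on
the coordinates `-2r, …, -2` and bounded by `M = ‖f‖`, then for any `A' ⊆ 2ℤ₋` containing
`0`, the conditional expectations of `f (ζ^{A'}_n)` and of `f (ζ^0_n)` given `{0 → L_n}`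
differ by at most `2 (n + r) ‖f‖ exp (-β n)`. -/
theorem stmt11 (p : ℝ) (hp0 : 0 < p) (hp1 : p < 1)
    (P : Measure Config) [IsProbabilityMeasure P] (hiid : IIDBernoulli P p)
    (β : ℝ) (hβ : 0 < β)
    (hdecay : ∀ x : ℤ, ∀ n : ℕ,
      P {ω : Config | ∃ y : ℤ, OpenPath ω (x, 0) (y, (n : ℤ))}
        ≤ ENNReal.ofReal (Real.exp (-β * n)))
    (r : ℕ) (f : Set ℤ → ℝ) (M : ℝ) (hM : ∀ B : Set ℤ, |f B| ≤ M)
    (hcyl : ∀ B B' : Set ℤ,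
      (∀ z : ℤ, -2 * (r : ℤ) ≤ z → z ≤ -2 → (z ∈ B ↔ z ∈ B')) → f B = f B')
    (A' : Set ℤ) (hA0 : (0 : ℤ) ∈ A') (hAsub : ∀ z ∈ A', Even z ∧ z ≤ 0)
    (n : ℕ) :
    |(∫ ω, f (zeta ω A' n)
        ∂(P[|{ω : Config | ∃ y : ℤ, OpenPath ω (0, 0) (y, (n : ℤ))}])) -
      (∫ ω, f (zeta ω {0} n)
        ∂(P[|{ω : Config | ∃ y : ℤ, OpenPath ω (0, 0) (y, (n : ℤ))}]))|
      ≤ 2 * ((n : ℝ) + r) * M * Real.exp (-β * n) := by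
  classical
  have hM0 : 0 ≤ M := le_trans (abs_nonneg _) (hM ∅)
  have hexp : (0:ℝ) < Real.exp (-β * n) := Real.exp_pos _
  have hRHS : (0:ℝ) ≤ 2 * ((n : ℝ) + r) * M * Real.exp (-β * n) := by
    apply mul_nonneg (mul_nonneg (by positivity) hM0) hexp.le
  set C : Set Config := {ω : Config | ∃ y : ℤ, OpenPath ω (0, 0) (y, (n : ℤ))} with hCdef
  have hCmeas : MeasurableSet C := Perc.measurableSet_reachEvent 0 n
  by_cases hPC : P C = 0
  · have hzero : P[|C] = 0 := by
      rw [ProbabilityTheory.cond, Measure.restrict_eq_zero.mpr hPC, smul_zero]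
    rw [hzero]
    simpa using hRHS
  · haveI := cond_isProbabilityMeasure (μ := P) hPC
    set μ := P[|C] with hμ
    have hg1 : Measurable fun ω => f (zeta ω A' n) :=
      Perc.measurable_f_zeta A' n (fun x hx => (hAsub x hx).2) hcyl
    have hg0 : Measurable fun ω => f (zeta ω {0} n) :=
      Perc.measurable_f_zeta {0} n (by simp) hcyl
    have hint1 : Integrable (fun ω => f (zeta ω A' n)) μ :=
      Integrable.mono' (integrable_const M) hg1.aestronglyMeasurable
        (Filter.Eventually.of_forall fun ω => by rw [Real.norm_eq_abs]; exact hM _)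
    have hint0 : Integrable (fun ω => f (zeta ω {0} n)) μ :=
      Integrable.mono' (integrable_const M) hg0.aestronglyMeasurable
        (Filter.Eventually.of_forall fun ω => by rw [Real.norm_eq_abs]; exact hM _)
    rw [← integral_sub hint1 hint0]
    set D : Set Config := {ω : Config | f (zeta ω A' n) ≠ f (zeta ω {0} n)} with hDdef
    have hDmeas : MeasurableSet D := (measurableSet_eq_fun hg1 hg0).compl
    have hptwise : ∀ ω, |f (zeta ω A' n) - f (zeta ω {0} n)| ≤
        D.indicator (fun _ => 2 * M) ω := by
      intro ω
      by_cases hω : ω ∈ D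
      · rw [Set.indicator_of_mem hω]
        calc |f (zeta ω A' n) - f (zeta ω {0} n)| ≤ |f (zeta ω A' n)| + |f (zeta ω {0} n)| :=
            abs_sub _ _
          _ ≤ M + M := add_le_add (hM _) (hM _)
          _ = 2 * M := by ring
      · rw [Set.indicator_of_notMem hω]
        have : f (zeta ω A' n) = f (zeta ω {0} n) := not_not.mp hω
        rw [this, sub_self, abs_zero]
    have h1 : |∫ ω, (f (zeta ω A' n) - f (zeta ω {0} n)) ∂μ| ≤ 2 * M * (μ D).toReal := by
      calc |∫ ω, (f (zeta ω A' n) - f (zeta ω {0} n)) ∂μ|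
          ≤ ∫ ω, |f (zeta ω A' n) - f (zeta ω {0} n)| ∂μ := by
            rw [← Real.norm_eq_abs]
            exact (norm_integral_le_integral_norm _).trans (le_of_eq (by
              congr 1))
        _ ≤ ∫ ω, D.indicator (fun _ => 2 * M) ω ∂μ :=
            integral_mono (hint1.sub hint0).abs
              ((integrable_const (2 * M)).indicator hDmeas)
              hptwise
        _ = (μ D).toReal • (2 * M) := integral_indicator_const (2 * M) hDmeas
        _ = 2 * M * (μ D).toReal := by rw [smul_eq_mul]; ring
    have h2 : (μ D).toReal ≤ ((n : ℝ) + r) * Real.exp (-β * n) := by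
      have hkey := Perc.key_bound P hiid (β := β) n r (fun x => hdecay x n) hA0 hAsub hcyl
      have hμD : μ D = (P C)⁻¹ * P (C ∩ D) := cond_apply hCmeas P D
      have hle : μ D ≤ (n + r : ℕ) * ENNReal.ofReal (Real.exp (-β * n)) := by
        rw [hμD, Set.inter_comm]
        calc (P C)⁻¹ * P (D ∩ C)
            ≤ (P C)⁻¹ * ((n + r : ℕ) * ENNReal.ofReal (Real.exp (-β * n)) * P C) :=
              mul_le_mul_right hkey _
          _ = ((n + r : ℕ) * ENNReal.ofReal (Real.exp (-β * n))) * ((P C)⁻¹ * P C) := by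
              ring
          _ = (n + r : ℕ) * ENNReal.ofReal (Real.exp (-β * n)) := by
              rw [ENNReal.inv_mul_cancel hPC (measure_ne_top P C), mul_one]
      have hne : ((n + r : ℕ) : ENNReal) * ENNReal.ofReal (Real.exp (-β * n)) ≠ ⊤ :=
        ENNReal.mul_ne_top (ENNReal.natCast_ne_top _) ENNReal.ofReal_ne_top
      calc (μ D).toReal ≤ (((n + r : ℕ) : ENNReal) * ENNReal.ofReal (Real.exp (-β * n))).toReal :=
          ENNReal.toReal_mono hne hle
        _ = ((n : ℝ) + r) * Real.exp (-β * n) := by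
            rw [ENNReal.toReal_mul, ENNReal.toReal_natCast, ENNReal.toReal_ofReal hexp.le]
            push_cast
            ring
    calc |∫ ω, (f (zeta ω A' n) - f (zeta ω {0} n)) ∂μ| ≤ 2 * M * (μ D).toReal := h1
      _ ≤ 2 * M * (((n : ℝ) + r) * Real.exp (-β * n)) :=
          mul_le_mul_of_nonneg_left h2 (by linarith)
      _ = 2 * ((n : ℝ) + r) * M * Real.exp (-β * n) := by ring
end
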